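/- arXiv:1701.05030 — 3 statements merged into one kernel-verified Lean document; each statement's English description precedes it below -/
import Mathlib

section
/- Let n ≥ 1, let 0 ≤ i ≤ n, and let ℱ ⊆ 2^[n] be an antichain. Then β²_i(ℱ) ≤ β²_i(binom([n], j(i))), where j(i) = i + ⌊(n−i)/3⌋ if n − i ≡ 0 or 1 (mod 3), and j(i) = i + ⌈(n−i)/3⌉ if n − i ≡ 2 (mod 3). In particular, the maximum of β²_i over all antichains in 2^[n] is attained by the full level binom([n], j(i)). -/
open Classical Finset

noncomputable section

/-- `G` is a copy of the finite poset `α` among the subsets of `[n]`: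
there is a bijection `φ` from `α` onto `G` such that `x ≤ y` implies `φ x ⊆ φ y`. -/
def IsCopy (α : Type) [PartialOrder α] [Fintype α] {n : ℕ}
    (G : Finset (Finset (Fin n))) : Prop :=
  ∃ φ : α → Finset (Fin n), Function.Injective φ ∧
    Finset.image φ Finset.univ = G ∧ ∀ x y : α, x ≤ y → φ x ⊆ φ y

/-- `copyCount α F` is the number of copies of the poset `α` in the family `F`,
copies being counted as subfamilies of `F`. -/
def copyCount (α : Type) [PartialOrder α] [Fintype α] {n : ℕ}
    (F : Finset (Finset (Fin n))) : ℕ :=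
  (F.powerset.filter fun G => IsCopy α G).card

/-- `La n P Q`: the maximum number of copies of `Q` in a `P`-free family of subsets of `[n]`. -/
def La (n : ℕ) (P Q : Type) [PartialOrder P] [Fintype P]
    [PartialOrder Q] [Fintype Q] : ℕ :=
  ((Finset.univ : Finset (Finset (Finset (Fin n)))).filter fun F =>
    copyCount P F = 0).sup (copyCount Q)

/-- `La2 n P₁ P₂ Q`: the maximum number of copies of `Q` in a family of subsets of `[n]`
that is both `P₁`-free and `P₂`-free. -/
def La2 (n : ℕ) (P₁ P₂ Q : Type) [PartialOrder P₁] [Fintype P₁]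
    [PartialOrder P₂] [Fintype P₂] [PartialOrder Q] [Fintype Q] : ℕ :=
  ((Finset.univ : Finset (Finset (Finset (Fin n)))).filter fun F =>
    copyCount P₁ F = 0 ∧ copyCount P₂ F = 0).sup (copyCount Q)

/-- the full `k`-th level of `2^[n]`. -/
def level (n k : ℕ) : Finset (Finset (Fin n)) :=
  Finset.univ.filter fun A => A.card = k

/-- `γ^r_{i,j}(F)`: the number of `r`-element subfamilies of `F` whose intersection has
size `i` and whose union has size `j`. -/
def gammaCount (r n i j : ℕ) (F : Finset (Finset (Fin n))) : ℕ :=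
  (F.powerset.filter fun G =>
    G.card = r ∧ (G.inf id).card = i ∧ (G.sup id).card = j).card

/-- `β^r_i(F)`: the number of `r`-element subfamilies of `F` whose intersection has size `i`. -/
def betaCount (r n i : ℕ) (F : Finset (Finset (Fin n))) : ℕ :=
  (F.powerset.filter fun G => G.card = r ∧ (G.inf id).card = i).card

/-- the complete multi-level poset `K_{r 0, …, r (s-1)}`: level `i` has `r i` elements,
and every element of level `i` is below every element of level `j` whenever `i < j`. -/
def KP {s : ℕ} (r : Fin s → ℕ) : Type := Σ i, Fin (r i)

namespace KP

variable {s : ℕ} {r : Fin s → ℕ}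

def le (x y : KP r) : Prop := x = y ∨ x.1 < y.1

instance : PartialOrder (KP r) where
  le := KP.le
  le_refl x := Or.inl rfl
  le_trans x y z hxy hyz := by
    rcases hxy with rfl | h
    · exact hyz
    · rcases hyz with rfl | h'
      · exact Or.inr h
      · exact Or.inr (h.trans h')
  le_antisymm x y hxy hyx := by
    rcases hxy with rfl | h
    · rfl
    · rcases hyx with rfl | h'
      · rfl
      · exact absurd (h.trans h') (lt_irrefl _)

instance : Fintype (KP r) := inferInstanceAs (Fintype (Σ i, Fin (r i)))

end KP

/-- the chain (totally ordered poset) with `k` elements. -/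
abbrev PChain (k : ℕ) := Fin k

/-- `∨_r = K_{1,r}` -/
abbrev VeePoset (r : ℕ) := KP ![1, r]

/-- `∧_r = K_{r,1}` -/
abbrev WedgePoset (r : ℕ) := KP ![r, 1]

/-- the generalized diamond `D_r = K_{1,r,1}` -/
abbrev DiamondPoset (r : ℕ) := KP ![1, r, 1]

/-- the butterfly poset `B = K_{2,2}` -/
abbrev Butterfly := KP ![2, 2]

/-- the height `l(Q)` of a finite poset: the number of elements of a longest chain. -/
def height (Q : Type) [PartialOrder Q] [Fintype Q] : ℕ :=
  ((Finset.univ : Finset (Finset Q)).filter fun C : Finset Q =>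
    IsChain (· ≤ ·) (↑C : Set Q)).sup Finset.card


/-- `Q₁ ⊗_r Q₂`: disjoint copies of `Q₁` and `Q₂` with an `r`-element antichain in between;
everything in `Q₁` is below the middle elements and below everything in `Q₂`,
and the middle elements are below everything in `Q₂`. -/
inductive Otimes (Q₁ Q₂ : Type) (r : ℕ) : Type
  | bot : Q₁ → Otimes Q₁ Q₂ r
  | mid : Fin r → Otimes Q₁ Q₂ r
  | top : Q₂ → Otimes Q₁ Q₂ r

namespace Otimes

variable {Q₁ Q₂ : Type} {r : ℕ}

def le [PartialOrder Q₁] [PartialOrder Q₂] : Otimes Q₁ Q₂ r → Otimes Q₁ Q₂ r → Prop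
  | bot a, bot b => a ≤ b
  | bot _, mid _ => True
  | bot _, top _ => True
  | mid i, mid j => i = j
  | mid _, top _ => True
  | top a, top b => a ≤ b
  | _, _ => False

instance [PartialOrder Q₁] [PartialOrder Q₂] : PartialOrder (Otimes Q₁ Q₂ r) where
  le := Otimes.le
  le_refl x := by cases x <;> simp [Otimes.le]
  le_trans x y z hxy hyz := by
    cases x <;> cases y <;> cases z <;> simp_all [Otimes.le] <;>
      first
        | exact le_trans hxy hyz
        | trivial
  le_antisymm x y hxy hyx := by
    cases x <;> cases y <;> simp_all [Otimes.le] <;>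
      first
        | exact le_antisymm hxy hyx
        | rfl

instance [Fintype Q₁] [Fintype Q₂] : Fintype (Otimes Q₁ Q₂ r) :=
  Fintype.ofEquiv (Q₁ ⊕ Fin r ⊕ Q₂)
    { toFun := fun x => match x with
        | Sum.inl a => bot a
        | Sum.inr (Sum.inl i) => mid i
        | Sum.inr (Sum.inr b) => top b
      invFun := fun x => match x with
        | bot a => Sum.inl a
        | mid i => Sum.inr (Sum.inl i)
        | top b => Sum.inr (Sum.inr b)
      left_inv := fun x => by rcases x with a | (i | b) <;> rfl
      right_inv := fun x => by cases x <;> rfl }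

end Otimes

/-- `Q ⊕ r`: the poset obtained from `Q` by adding an antichain of `r` new elements,
each above every element of `Q`. -/
inductive Oplus (Q : Type) (r : ℕ) : Type
  | base : Q → Oplus Q r
  | new : Fin r → Oplus Q r

namespace Oplus

variable {Q : Type} {r : ℕ}

def le [PartialOrder Q] : Oplus Q r → Oplus Q r → Prop
  | base a, base b => a ≤ b
  | base _, new _ => True
  | new i, new j => i = j
  | new _, base _ => False

instance [PartialOrder Q] : PartialOrder (Oplus Q r) where
  le := Oplus.le
  le_refl x := by cases x <;> simp [Oplus.le]
  le_trans x y z hxy hyz := by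
    cases x <;> cases y <;> cases z <;> simp_all [Oplus.le] <;>
      first
        | exact le_trans hxy hyz
        | trivial
  le_antisymm x y hxy hyx := by
    cases x <;> cases y <;> simp_all [Oplus.le] <;>
      first
        | exact le_antisymm hxy hyx
        | rfl

instance [Fintype Q] : Fintype (Oplus Q r) :=
  Fintype.ofEquiv (Q ⊕ Fin r)
    { toFun := fun x => match x with
        | Sum.inl a => base a
        | Sum.inr i => new i
      invFun := fun x => match x with
        | base a => Sum.inl a
        | new i => Sum.inr i
      left_inv := fun x => by rcases x with a | i <;> rfl
      right_inv := fun x => by cases x <;> rfl }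

end Oplus

/-- the poset `N`: four elements `a, b, c, d` with `a ≤ c`, `b ≤ c`, `b ≤ d`
and no other nontrivial relations. -/
inductive NPoset : Type
  | a | b | c | d
  deriving DecidableEq

instance : Fintype NPoset :=
  ⟨{NPoset.a, NPoset.b, NPoset.c, NPoset.d}, fun x => by cases x <;> simp⟩

namespace NPoset

def le : NPoset → NPoset → Prop := fun x y =>
  x = y ∨ (x = a ∧ y = c) ∨ (x = b ∧ y = c) ∨ (x = b ∧ y = d)

instance : DecidableRel le := fun x y => by unfold le; infer_instance

theorem le_refl' : ∀ x : NPoset, le x x := by decide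
theorem le_trans' : ∀ x y z : NPoset, le x y → le y z → le x z := by decide
theorem le_antisymm' : ∀ x y : NPoset, le x y → le y x → x = y := by decide

instance : PartialOrder NPoset :=
  { le := le, le_refl := le_refl', le_trans := le_trans', le_antisymm := le_antisymm' }

end NPoset

/-- the poset `B⁺`: five elements with `a < c`, `a < e`, `b < c`, `b < d`, `d < e`
(and the relation `b < e` forced by transitivity). -/
inductive BPlusPoset : Type
  | a | b | c | d | e
  deriving DecidableEq

instance : Fintype BPlusPoset :=
  ⟨{BPlusPoset.a, BPlusPoset.b, BPlusPoset.c, BPlusPoset.d, BPlusPoset.e}, fun x => by cases x <;> simp⟩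

namespace BPlusPoset

def le : BPlusPoset → BPlusPoset → Prop := fun x y =>
  x = y ∨ (x = a ∧ y = c) ∨ (x = a ∧ y = e) ∨ (x = b ∧ y = c) ∨ (x = b ∧ y = d) ∨
    (x = b ∧ y = e) ∨ (x = d ∧ y = e)

instance : DecidableRel le := fun x y => by unfold le; infer_instance

theorem le_refl' : ∀ x : BPlusPoset, le x x := by decide
theorem le_trans' : ∀ x y z : BPlusPoset, le x y → le y z → le x z := by decide
theorem le_antisymm' : ∀ x y : BPlusPoset, le x y → le y x → x = y := by decide

instance : PartialOrder BPlusPoset :=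
  { le := le, le_refl := le_refl', le_trans := le_trans', le_antisymm := le_antisymm' }

end BPlusPoset

/-- the poset `B⁺⁺`: five elements with `a, b < c, d` and `d < e`
(hence also `a < e` and `b < e`). -/
inductive BPlusPlusPoset : Type
  | a | b | c | d | e
  deriving DecidableEq

instance : Fintype BPlusPlusPoset :=
  ⟨{BPlusPlusPoset.a, BPlusPlusPoset.b, BPlusPlusPoset.c, BPlusPlusPoset.d, BPlusPlusPoset.e}, fun x => by cases x <;> simp⟩

namespace BPlusPlusPoset

def le : BPlusPlusPoset → BPlusPlusPoset → Prop := fun x y =>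
  x = y ∨ (x = a ∧ y = c) ∨ (x = a ∧ y = d) ∨ (x = a ∧ y = e) ∨ (x = b ∧ y = c) ∨
    (x = b ∧ y = d) ∨ (x = b ∧ y = e) ∨ (x = d ∧ y = e)

instance : DecidableRel le := fun x y => by unfold le; infer_instance

theorem le_refl' : ∀ x : BPlusPlusPoset, le x x := by decide
theorem le_trans' : ∀ x y z : BPlusPlusPoset, le x y → le y z → le x z := by decide
theorem le_antisymm' : ∀ x y : BPlusPlusPoset, le x y → le y x → x = y := by decide

instance : PartialOrder BPlusPlusPoset :=
  { le := le, le_refl := le_refl', le_trans := le_trans', le_antisymm := le_antisymm' }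

end BPlusPlusPoset

/-- the binary entropy function `h(x) = -x log₂ x - (1-x) log₂ (1-x)`. -/
def binEnt (x : ℝ) : ℝ := -x * Real.logb 2 x - (1 - x) * Real.logb 2 (1 - x)



open Nat

lemma fact_smooth (a b : ℕ) (h : b + 2 ≤ a) :
    (a - 1)! * (b + 1)! ≤ a ! * b ! := by
  obtain ⟨a', rfl⟩ : ∃ a', a = a' + 1 := ⟨a - 1, by omega⟩
  simp only [Nat.add_sub_cancel]
  rw [Nat.factorial_succ (a'), Nat.factorial_succ b]
  calc a' ! * ((b + 1) * b !) = (b+1) * (a' ! * b !) := by ring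
    _ ≤ (a'+1) * (a' ! * b !) := by
        exact Nat.mul_le_mul_right _ (by omega)
    _ = (a' + 1) * a' ! * b ! := by ring

lemma fact_balanced_aux : ∀ N a b c : ℕ, a*a + b*b + c*c ≤ N →
    ((a+b+c)/3)! * (((a+b+c)+1)/3)! * (((a+b+c)+2)/3)! ≤ a ! * b ! * c ! := by
  intro N
  induction N with
  | zero => intro a b c h
            have h0 : a*a = 0 ∧ b*b = 0 ∧ c*c = 0 := by omega
            have : a = 0 ∧ b = 0 ∧ c = 0 :=
              ⟨by nlinarith [h0.1], by nlinarith [h0.2.1], by nlinarith [h0.2.2]⟩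
            obtain ⟨rfl, rfl, rfl⟩ := this; simp
  | succ N ih =>
    intro a b c h
    by_cases h1 : b + 2 ≤ a
    · -- smooth (a,b)
      obtain ⟨a', rfl⟩ : ∃ a', a = a' + 1 := ⟨a - 1, by omega⟩
      have hsum : (a' + (b+1) + c) = (a' + 1 + b + c) := by omega
      have hm : a' * a' + (b+1)*(b+1) + c*c ≤ N := by nlinarith
      have := ih a' (b+1) c hm
      rw [hsum] at this
      refine le_trans ?_ (Nat.mul_le_mul_right (c !) (fact_smooth (a'+1) b h1))
      calc ((a'+1+b+c)/3)! * ((a'+1+b+c+1)/3)! * ((a'+1+b+c+2)/3)! ≤ a' ! * (b+1)! * c ! := this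
        _ = (a' + 1 - 1)! * (b+1)! * c ! := by simp only [Nat.add_sub_cancel]
    · by_cases h2 : a + 2 ≤ b
      · obtain ⟨b', rfl⟩ : ∃ b', b = b' + 1 := ⟨b - 1, by omega⟩
        have hm : (b')*(b') + (a+1)*(a+1) + c*c ≤ N := by nlinarith
        have := ih b' (a+1) c hm
        have hsum : (b' + (a+1) + c) = (a + (b'+1) + c) := by omega
        rw [hsum] at this
        have hs := Nat.mul_le_mul_right (c !) (fact_smooth (b'+1) a h2)
        simp only [Nat.add_sub_cancel] at hs
        calc ((a+(b'+1)+c)/3)! * ((a+(b'+1)+c+1)/3)! * ((a+(b'+1)+c+2)/3)! ≤ b' ! * (a+1)! * c ! := this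
          _ = (a+1)! * b' ! * c ! := by ring
          _ ≤ a ! * (b'+1)! * c ! := by
              calc (a+1)! * b' ! * c ! = (b'+1-1)! * (a+1)! * c ! := by simp only [Nat.add_sub_cancel]; ring
                _ ≤ (b'+1)! * a ! * c ! := Nat.mul_le_mul_right _ (fact_smooth (b'+1) a h2)
                _ = a ! * (b'+1)! * c ! := by ring
      · by_cases h3 : c + 2 ≤ a
        · obtain ⟨a', rfl⟩ : ∃ a', a = a' + 1 := ⟨a - 1, by omega⟩
          have hm : a'*a' + b*b + (c+1)*(c+1) ≤ N := by nlinarith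
          have := ih a' b (c+1) hm
          have hsum : (a' + b + (c+1)) = (a' + 1 + b + c) := by omega
          rw [hsum] at this
          refine le_trans this ?_
          calc a' ! * b ! * (c+1)! = a' ! * (c+1)! * b ! := by ring
            _ ≤ (a'+1)! * c ! * b ! := by
                have := fact_smooth (a'+1) c h3
                simp only [Nat.add_sub_cancel] at this
                exact Nat.mul_le_mul_right _ this
            _ = (a'+1)! * b ! * c ! := by ring
        · by_cases h4 : a + 2 ≤ c
          · obtain ⟨c', rfl⟩ : ∃ c', c = c' + 1 := ⟨c - 1, by omega⟩
            have hm : (a+1)*(a+1) + b*b + c'*c' ≤ N := by nlinarith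
            have := ih (a+1) b c' hm
            have hsum : ((a+1) + b + c') = (a + b + (c'+1)) := by omega
            rw [hsum] at this
            refine le_trans this ?_
            calc (a+1)! * b ! * c' ! = (a+1)! * c' ! * b ! := by ring
              _ ≤ (c'+1)! * a ! * b ! := by
                  have := fact_smooth (c'+1) a h4
                  simp only [Nat.add_sub_cancel] at this
                  calc (a+1)! * c' ! * b ! = (c' + 1 - 1)! * (a+1)! * b ! := by simp only [Nat.add_sub_cancel]; ring
                    _ ≤ (c'+1)! * a ! * b ! := Nat.mul_le_mul_right _ this
              _ = a ! * b ! * (c'+1)! := by ring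
          · by_cases h5 : c + 2 ≤ b
            · obtain ⟨b', rfl⟩ : ∃ b', b = b' + 1 := ⟨b - 1, by omega⟩
              have hm : a*a + b'*b' + (c+1)*(c+1) ≤ N := by nlinarith
              have := ih a b' (c+1) hm
              have hsum : (a + b' + (c+1)) = (a + (b'+1) + c) := by omega
              rw [hsum] at this
              refine le_trans this ?_
              calc a ! * b' ! * (c+1)! = a ! * ((b'+1-1)! * (c+1)!) := by simp only [Nat.add_sub_cancel]; ring
                _ ≤ a ! * ((b'+1)! * c !) := Nat.mul_le_mul_left _ (fact_smooth (b'+1) c h5)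
                _ = a ! * (b'+1)! * c ! := by ring
            · by_cases h6 : b + 2 ≤ c
              · obtain ⟨c', rfl⟩ : ∃ c', c = c' + 1 := ⟨c - 1, by omega⟩
                have hm : a*a + (b+1)*(b+1) + c'*c' ≤ N := by nlinarith
                have := ih a (b+1) c' hm
                have hsum : (a + (b+1) + c') = (a + b + (c'+1)) := by omega
                rw [hsum] at this
                refine le_trans this ?_
                calc a ! * (b+1)! * c' ! = a ! * (c' ! * (b+1)!) := by ring
                  _ = a ! * ((c'+1-1)! * (b+1)!) := by simp only [Nat.add_sub_cancel]
                  _ ≤ a ! * ((c'+1)! * b !) := Nat.mul_le_mul_left _ (fact_smooth (c'+1) b h6)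
                  _ = a ! * b ! * (c'+1)! := by ring
              · -- balanced
                have : (a = (a+b+c)/3 ∧ b = ((a+b+c)+1)/3 ∧ c = ((a+b+c)+2)/3)
                    ∨ (a = (a+b+c)/3 ∧ c = ((a+b+c)+1)/3 ∧ b = ((a+b+c)+2)/3)
                    ∨ (b = (a+b+c)/3 ∧ a = ((a+b+c)+1)/3 ∧ c = ((a+b+c)+2)/3)
                    ∨ (b = (a+b+c)/3 ∧ c = ((a+b+c)+1)/3 ∧ a = ((a+b+c)+2)/3)
                    ∨ (c = (a+b+c)/3 ∧ a = ((a+b+c)+1)/3 ∧ b = ((a+b+c)+2)/3)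
                    ∨ (c = (a+b+c)/3 ∧ b = ((a+b+c)+1)/3 ∧ a = ((a+b+c)+2)/3) := by omega
                rcases this with ⟨e1,e2,e3⟩|⟨e1,e2,e3⟩|⟨e1,e2,e3⟩|⟨e1,e2,e3⟩|⟨e1,e2,e3⟩|⟨e1,e2,e3⟩ <;>
                  rw [← e1, ← e2, ← e3] <;> apply le_of_eq <;> ring

lemma fact_balanced (a b c m : ℕ) (hsum : a + b + c = m) :
    (m/3)! * ((m+1)/3)! * ((m+2)/3)! ≤ a ! * b ! * c ! := by
  have := fact_balanced_aux (a*a+b*b+c*c) a b c le_rfl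
  rwa [hsum] at this


def fcol (n i c1 c2 : ℕ) : Fin n → Fin 4 := fun x =>
  if x.val < i then 0 else if x.val < c1 then 1 else if x.val < c1 + (c2 - i) then 2 else 3

def gcol {n : ℕ} (F1 F2 : Finset (Fin n)) : Fin n → Fin 4 := fun y =>
  if y ∈ F1 ∩ F2 then 0 else if y ∈ F1 then 1 else if y ∈ F2 then 2 else 3

lemma fcol_eq_zero {n i c1 c2 : ℕ} (x : Fin n) : fcol n i c1 c2 x = 0 ↔ x.val < i := by
  unfold fcol; split_ifs with h1 h2 h3 <;> simp_all <;> omega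

lemma fcol_eq_one {n i c1 c2 : ℕ} (x : Fin n) :
    fcol n i c1 c2 x = 1 ↔ (¬ x.val < i ∧ x.val < c1) := by
  unfold fcol; split_ifs with h1 h2 h3 <;> simp_all
lemma fcol_eq_two {n i c1 c2 : ℕ} (x : Fin n) :
    fcol n i c1 c2 x = 2 ↔ (¬ x.val < i ∧ ¬ x.val < c1 ∧ x.val < c1 + (c2 - i)) := by
  unfold fcol; split_ifs with h1 h2 h3 <;> simp_all
lemma fcol_eq_three {n i c1 c2 : ℕ} (x : Fin n) :
    fcol n i c1 c2 x = 3 ↔ (¬ x.val < i ∧ ¬ x.val < c1 ∧ ¬ x.val < c1 + (c2 - i)) := by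
  unfold fcol; split_ifs with h1 h2 h3 <;> simp_all

lemma gcol_eq_zero {n : ℕ} {F1 F2 : Finset (Fin n)} (y : Fin n) :
    gcol F1 F2 y = 0 ↔ y ∈ F1 ∩ F2 := by
  unfold gcol; split_ifs with h1 h2 h3 <;> simp_all
lemma gcol_eq_one {n : ℕ} {F1 F2 : Finset (Fin n)} (y : Fin n) :
    gcol F1 F2 y = 1 ↔ y ∈ F1 \ F2 := by
  unfold gcol; split_ifs with h1 h2 h3 <;> simp_all [Finset.mem_inter, Finset.mem_sdiff] <;> tauto
lemma gcol_eq_two {n : ℕ} {F1 F2 : Finset (Fin n)} (y : Fin n) :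
    gcol F1 F2 y = 2 ↔ y ∈ F2 \ F1 := by
  unfold gcol; split_ifs with h1 h2 h3 <;> simp_all [Finset.mem_inter, Finset.mem_sdiff] <;> tauto
lemma gcol_eq_three {n : ℕ} {F1 F2 : Finset (Fin n)} (y : Fin n) :
    gcol F1 F2 y = 3 ↔ y ∉ F1 ∪ F2 := by
  unfold gcol; split_ifs with h1 h2 h3 <;> simp_all [Finset.mem_inter, Finset.mem_union] <;> tauto

lemma card_filter_fin (n : ℕ) (P : ℕ → Prop) [DecidablePred P] :
    (univ.filter fun x : Fin n => P x.val).card = ((Finset.range n).filter P).card := by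
  apply Finset.card_bij (fun x _ => x.val)
  · intro a ha
    simp only [Finset.mem_filter, Finset.mem_range] at *
    exact ⟨a.isLt, ha.2⟩
  · intro a _ b _ hab; exact Fin.ext hab
  · intro b hb
    simp only [Finset.mem_filter, Finset.mem_range] at hb
    exact ⟨⟨b, hb.1⟩, by simp [hb.2], rfl⟩

def pairSet (n i : ℕ) (F : Finset (Finset (Fin n))) :
    Finset (Finset (Fin n) × Finset (Fin n)) :=
  (F ×ˢ F).filter fun p => p.1 ≠ p.2 ∧ (p.1 ∩ p.2).card = i

def compatSet {n : ℕ} (i : ℕ) (p : Finset (Fin n) × Finset (Fin n)) :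
    Finset (Equiv.Perm (Fin n)) :=
  Finset.univ.filter fun σ => ∀ x, gcol p.1 p.2 (σ x) = fcol n i p.1.card p.2.card x

lemma range_filter_lt {n t : ℕ} (ht : t ≤ n) :
    ((Finset.range n).filter fun v => v < t) = Finset.range t := by
  ext v; simp only [Finset.mem_filter, Finset.mem_range]; omega

lemma card_perm_color {α : Type} [Fintype α] [DecidableEq α] (f g : α → Fin 4)
    (h : ∀ k, (univ.filter fun x => f x = k).card = (univ.filter fun x => g x = k).card) :
    (univ.filter fun σ : Equiv.Perm α => ∀ x, g (σ x) = f x).card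
      = ∏ k : Fin 4, Nat.factorial ((univ.filter fun x => f x = k).card) := by
  have E : {σ : Equiv.Perm α // ∀ x, g (σ x) = f x}
      ≃ ∀ k : Fin 4, ({x // f x = k} ≃ {x // g x = k}) :=
    { toFun := fun σ k => (σ.1 : α ≃ α).subtypeEquiv (fun x => by rw [σ.2 x])
      invFun := fun E => ⟨(Equiv.sigmaFiberEquiv f).symm.trans
          ((Equiv.sigmaCongrRight E).trans (Equiv.sigmaFiberEquiv g)),
          fun x => (E (f x) ⟨x, rfl⟩).2⟩
      left_inv := fun σ => Subtype.ext (Equiv.ext fun x => rfl)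
      right_inv := fun E => funext fun k => Equiv.ext fun x => by
        obtain ⟨x, hx⟩ := x
        subst hx
        rfl }
  have := Fintype.card_congr E
  rw [Fintype.card_subtype] at this
  rw [this, Fintype.card_pi]
  congr 1
  funext k
  have e : {x // f x = k} ≃ {x // g x = k} :=
    Fintype.equivOfCardEq (by rw [Fintype.card_subtype, Fintype.card_subtype, h])
  rw [Fintype.card_equiv e, Fintype.card_subtype]

lemma compat_card {n i : ℕ} (F1 F2 : Finset (Fin n)) (hi : (F1 ∩ F2).card = i) :
    (compatSet i (F1, F2)).card
      = i ! * ((F1.card - i)! * ((F2.card - i)! * (n - (F1.card + (F2.card - i)))!)) := by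
  show (Finset.univ.filter fun σ : Equiv.Perm (Fin n) =>
      ∀ x, gcol F1 F2 (σ x) = fcol n i F1.card F2.card x).card = _
  set c1 := F1.card with hc1
  set c2 := F2.card with hc2
  have hi1 : i ≤ c1 := hi ▸ Finset.card_le_card Finset.inter_subset_left
  have hi2 : i ≤ c2 := hi ▸ Finset.card_le_card Finset.inter_subset_right
  have hun : (F1 ∪ F2).card = c1 + (c2 - i) := by
    have := Finset.card_inter_add_card_union F1 F2
    omega
  have hun' : c1 + (c2 - i) ≤ n := by
    rw [← hun]
    calc (F1 ∪ F2).card ≤ Fintype.card (Fin n) := Finset.card_le_univ _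
      _ = n := Fintype.card_fin n
  -- g-fiber cards
  have g0 : (univ.filter fun y => gcol F1 F2 y = 0).card = i := by
    have : (univ.filter fun y => gcol F1 F2 y = 0) = F1 ∩ F2 := by
      ext y; simp [gcol_eq_zero]
    rw [this, hi]
  have g1 : (univ.filter fun y => gcol F1 F2 y = 1).card = c1 - i := by
    have : (univ.filter fun y => gcol F1 F2 y = 1) = F1 \ F2 := by
      ext y; simp [gcol_eq_one]
    rw [this]
    have := Finset.card_sdiff_add_card_inter F1 F2
    omega
  have g2 : (univ.filter fun y => gcol F1 F2 y = 2).card = c2 - i := by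
    have : (univ.filter fun y => gcol F1 F2 y = 2) = F2 \ F1 := by
      ext y; simp [gcol_eq_two]
    rw [this]
    have h' := Finset.card_sdiff_add_card_inter F2 F1
    rw [Finset.inter_comm] at h'
    omega
  have g3 : (univ.filter fun y => gcol F1 F2 y = 3).card = n - (c1 + (c2 - i)) := by
    have : (univ.filter fun y => gcol F1 F2 y = 3) = (F1 ∪ F2)ᶜ := by
      ext y; simp [gcol_eq_three]
    rw [this, Finset.card_compl, Fintype.card_fin, hun]
  -- f-fiber cards
  have f0 : (univ.filter fun x => fcol n i c1 c2 x = 0).card = i := by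
    have e : (univ.filter fun x : Fin n => fcol n i c1 c2 x = 0)
        = univ.filter fun x : Fin n => x.val < i := by
      apply Finset.filter_congr; intro x _; rw [fcol_eq_zero]
    rw [e, card_filter_fin n (fun v => v < i), range_filter_lt (by omega), Finset.card_range]
  have f1 : (univ.filter fun x => fcol n i c1 c2 x = 1).card = c1 - i := by
    have e : (univ.filter fun x : Fin n => fcol n i c1 c2 x = 1)
        = univ.filter fun x : Fin n => (¬ x.val < i ∧ x.val < c1) := by
      apply Finset.filter_congr; intro x _; rw [fcol_eq_one]
    rw [e, card_filter_fin n (fun v => (¬ v < i ∧ v < c1))]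
    have : ((Finset.range n).filter fun v => (¬ v < i ∧ v < c1)) = Finset.Ico i c1 := by
      ext v; simp only [Finset.mem_filter, Finset.mem_range, Finset.mem_Ico]; omega
    rw [this, Nat.card_Ico]
  have f2 : (univ.filter fun x => fcol n i c1 c2 x = 2).card = c2 - i := by
    have e : (univ.filter fun x : Fin n => fcol n i c1 c2 x = 2)
        = univ.filter fun x : Fin n => (¬ x.val < i ∧ ¬ x.val < c1 ∧ x.val < c1 + (c2 - i)) := by
      apply Finset.filter_congr; intro x _; rw [fcol_eq_two]
    rw [e, card_filter_fin n (fun v => (¬ v < i ∧ ¬ v < c1 ∧ v < c1 + (c2 - i)))]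
    have : ((Finset.range n).filter fun v => (¬ v < i ∧ ¬ v < c1 ∧ v < c1 + (c2 - i)))
        = Finset.Ico c1 (c1 + (c2 - i)) := by
      ext v; simp only [Finset.mem_filter, Finset.mem_range, Finset.mem_Ico]; omega
    rw [this, Nat.card_Ico]; omega
  have f3 : (univ.filter fun x => fcol n i c1 c2 x = 3).card = n - (c1 + (c2 - i)) := by
    have e : (univ.filter fun x : Fin n => fcol n i c1 c2 x = 3)
        = univ.filter fun x : Fin n => (¬ x.val < i ∧ ¬ x.val < c1 ∧ ¬ x.val < c1 + (c2 - i)) := by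
      apply Finset.filter_congr; intro x _; rw [fcol_eq_three]
    rw [e, card_filter_fin n (fun v => (¬ v < i ∧ ¬ v < c1 ∧ ¬ v < c1 + (c2 - i)))]
    have : ((Finset.range n).filter fun v => (¬ v < i ∧ ¬ v < c1 ∧ ¬ v < c1 + (c2 - i)))
        = Finset.Ico (c1 + (c2 - i)) n := by
      ext v; simp only [Finset.mem_filter, Finset.mem_range, Finset.mem_Ico]; omega
    rw [this, Nat.card_Ico]
  have hcc : ∀ k, (univ.filter fun x => fcol n i c1 c2 x = k).card
      = (univ.filter fun x => gcol F1 F2 x = k).card := by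
    intro k
    fin_cases k
    · exact f0.trans g0.symm
    · exact f1.trans g1.symm
    · exact f2.trans g2.symm
    · exact f3.trans g3.symm
  have := card_perm_color (fcol n i c1 c2) (gcol F1 F2) hcc
  rw [Fin.prod_univ_four, f0, f1, f2, f3] at this
  rw [Finset.filter_congr_decidable] at this ⊢
  refine this.trans ?_
  ring

lemma mem_of_compat {n i : ℕ} (p : Finset (Fin n) × Finset (Fin n)) (σ : Equiv.Perm (Fin n))
    (hσ : ∀ x, gcol p.1 p.2 (σ x) = fcol n i p.1.card p.2.card x) (y : Fin n) :
    (y ∈ p.1 ↔ ((σ.symm y).val < i ∨ (σ.symm y).val < p.1.card)) ∧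
    (y ∈ p.2 ↔ ((σ.symm y).val < i ∨ (¬ (σ.symm y).val < i ∧ ¬ (σ.symm y).val < p.1.card ∧
      (σ.symm y).val < p.1.card + (p.2.card - i)))) := by
  have h := hσ (σ.symm y)
  rw [Equiv.apply_symm_apply] at h
  have h4 : ∀ k : Fin 4, k = 0 ∨ k = 1 ∨ k = 2 ∨ k = 3 := by decide
  rcases h4 (fcol n i p.1.card p.2.card (σ.symm y)) with hk | hk | hk | hk
  · have hg := h.trans hk
    rw [gcol_eq_zero] at hg
    rw [fcol_eq_zero] at hk
    rw [Finset.mem_inter] at hg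
    constructor <;> constructor <;> intro <;> tauto
  · have hg := h.trans hk
    rw [gcol_eq_one] at hg
    rw [fcol_eq_one] at hk
    rw [Finset.mem_sdiff] at hg
    constructor <;> constructor <;> intro <;> tauto
  · have hg := h.trans hk
    rw [gcol_eq_two] at hg
    rw [fcol_eq_two] at hk
    rw [Finset.mem_sdiff] at hg
    constructor <;> constructor <;> intro <;> tauto
  · have hg := h.trans hk
    rw [gcol_eq_three] at hg
    rw [fcol_eq_three] at hk
    rw [Finset.mem_union] at hg
    push_neg at hg
    constructor <;> constructor <;> intro <;> tauto

lemma compat_disjoint {n i : ℕ} {F : Finset (Finset (Fin n))}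
    (hF : IsAntichain (· ⊆ ·) (↑F : Set (Finset (Fin n)))) :
    ∀ p ∈ pairSet n i F, ∀ q ∈ pairSet n i F, p ≠ q → Disjoint (compatSet i p) (compatSet i q) := by
  intro p hp q hq hne
  rw [Finset.disjoint_left]
  intro σ hσp hσq
  apply hne
  simp only [pairSet, Finset.mem_filter, Finset.mem_product] at hp hq
  obtain ⟨⟨hp1, hp2⟩, hpne, hpcard⟩ := hp
  obtain ⟨⟨hq1, hq2⟩, hqne, hqcard⟩ := hq
  simp only [compatSet, Finset.mem_filter, Finset.mem_univ, true_and] at hσp hσq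
  have Hp := mem_of_compat p σ hσp
  have Hq := mem_of_compat q σ hσq
  have e1 : p.1 = q.1 := by
    rcases le_total p.1.card q.1.card with hle | hle
    · have hsub : p.1 ⊆ q.1 := by
        intro y hy
        rw [(Hq y).1]
        have := (Hp y).1.mp hy
        omega
      by_contra w
      exact (hF hp1 hq1 w) hsub
    · have hsub : q.1 ⊆ p.1 := by
        intro y hy
        rw [(Hp y).1]
        have := (Hq y).1.mp hy
        omega
      by_contra w
      exact (hF hq1 hp1 (fun h => w h.symm)) hsub
  have ec : p.1.card = q.1.card := by rw [e1]
  have e2 : p.2 = q.2 := by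
    rcases le_total p.2.card q.2.card with hle | hle
    · have hsub : p.2 ⊆ q.2 := by
        intro y hy
        rw [(Hq y).2]
        have := (Hp y).2.mp hy
        omega
      by_contra w
      exact (hF hp2 hq2 w) hsub
    · have hsub : q.2 ⊆ p.2 := by
        intro y hy
        rw [(Hp y).2]
        have := (Hq y).2.mp hy
        omega
      by_contra w
      exact (hF hq2 hp2 (fun h => w h.symm)) hsub
  exact Prod.ext e1 e2

lemma level_antichain (n k : ℕ) :
    IsAntichain (· ⊆ ·) (↑(level n k) : Set (Finset (Fin n))) := by
  intro A hA B hB hne hsub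
  simp only [level, Finset.coe_filter, Set.mem_setOf_eq, Finset.mem_univ, true_and] at hA hB
  exact hne (Finset.eq_of_subset_of_card_le hsub (by rw [hA, hB]))

lemma covering {n i j : ℕ} (hij : i < j) (h2 : i + 2*(j-i) ≤ n) (σ : Equiv.Perm (Fin n)) :
    ∃ q ∈ pairSet n i (level n j), σ ∈ compatSet i q := by
  have hjn : j ≤ n := by omega
  have hjj : j + (j - i) ≤ n := by omega
  set s1 : Finset (Fin n) := univ.filter (fun x => x.val < j) with hs1
  set s2 : Finset (Fin n) := univ.filter (fun x => x.val < i ∨ (¬ x.val < j ∧ x.val < j + (j - i))) with hs2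
  set F1 := Finset.map σ.toEmbedding s1 with hF1
  set F2 := Finset.map σ.toEmbedding s2 with hF2
  have m1 : ∀ y, y ∈ F1 ↔ (σ.symm y).val < j := by
    intro y; rw [hF1, Finset.mem_map_equiv, hs1, Finset.mem_filter]
    simp
  have m2 : ∀ y, y ∈ F2 ↔ ((σ.symm y).val < i ∨ (¬ (σ.symm y).val < j ∧ (σ.symm y).val < j + (j - i))) := by
    intro y; rw [hF2, Finset.mem_map_equiv, hs2, Finset.mem_filter]
    simp
  have hc1 : F1.card = j := by
    rw [hF1, Finset.card_map, hs1, card_filter_fin n (fun v => v < j),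
      range_filter_lt hjn, Finset.card_range]
  have hc2 : F2.card = j := by
    rw [hF2, Finset.card_map, hs2,
      card_filter_fin n (fun v => v < i ∨ (¬ v < j ∧ v < j + (j - i)))]
    have e : ((Finset.range n).filter fun v => v < i ∨ (¬ v < j ∧ v < j + (j - i)))
        = Finset.range i ∪ Finset.Ico j (j + (j - i)) := by
      ext v
      simp only [Finset.mem_filter, Finset.mem_range, Finset.mem_union, Finset.mem_Ico]
      omega
    rw [e, Finset.card_union_of_disjoint, Finset.card_range, Nat.card_Ico]
    · omega
    · rw [Finset.disjoint_left]
      intro v hv1 hv2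
      simp only [Finset.mem_range] at hv1
      simp only [Finset.mem_Ico] at hv2
      omega
  have hint : F1 ∩ F2 = Finset.map σ.toEmbedding (univ.filter fun x => x.val < i) := by
    ext y
    rw [Finset.mem_inter, m1, m2, Finset.mem_map_equiv, Finset.mem_filter]
    simp only [Finset.mem_univ, true_and]
    omega
  have hintc : (F1 ∩ F2).card = i := by
    rw [hint, Finset.card_map, card_filter_fin n (fun v => v < i),
      range_filter_lt (by omega), Finset.card_range]
  have hne : F1 ≠ F2 := by
    intro h
    have z : Fin n := ⟨i, by omega⟩
    have h1 : (⟨i, by omega⟩ : Fin n) ∈ s1 := by rw [hs1, Finset.mem_filter]; simpa using hij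
    have h2' : σ ⟨i, by omega⟩ ∈ F1 := by
      rw [m1]; simp only [Equiv.symm_apply_apply]; exact hij
    have h3 := (m2 (σ ⟨i, by omega⟩)).mp (Finset.ext_iff.mp h _ |>.mp h2')
    simp only [Equiv.symm_apply_apply] at h3
    omega
  refine ⟨(F1, F2), ?_, ?_⟩
  · simp only [pairSet, Finset.mem_filter, Finset.mem_product]
    refine ⟨⟨?_, ?_⟩, hne, hintc⟩
    · simp only [level, Finset.mem_filter, Finset.mem_univ, true_and]; exact hc1
    · simp only [level, Finset.mem_filter, Finset.mem_univ, true_and]; exact hc2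
  · simp only [compatSet, Finset.mem_filter, Finset.mem_univ, true_and]
    intro x
    show gcol F1 F2 (σ x) = fcol n i F1.card F2.card x
    rw [hc1, hc2]
    have k1 : (σ x ∈ F1) ↔ x.val < j := by rw [m1, Equiv.symm_apply_apply]
    have k2 : (σ x ∈ F2) ↔ (x.val < i ∨ (¬ x.val < j ∧ x.val < j + (j - i))) := by
      rw [m2, Equiv.symm_apply_apply]
    have k0 : (σ x ∈ F1 ∩ F2) ↔ x.val < i := by
      rw [Finset.mem_inter, k1, k2]; omega
    unfold gcol fcol
    simp only [k0, k1, k2]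
    split_ifs <;> first | rfl | omega

lemma doubling (n i : ℕ) (F : Finset (Finset (Fin n))) :
    (pairSet n i F).card = 2 * betaCount 2 n i F := by
  unfold betaCount
  rw [Finset.card_eq_sum_card_fiberwise
    (f := fun p : Finset (Fin n) × Finset (Fin n) => ({p.1, p.2} : Finset (Finset (Fin n))))
    (t := F.powerset.filter fun G => G.card = 2 ∧ (G.inf id).card = i)]
  · rw [Finset.sum_congr rfl (g := fun _ => 2)]
    · rw [Finset.sum_const, smul_eq_mul, mul_comm]
    · intro G hG
      simp only [Finset.mem_filter, Finset.mem_powerset] at hG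
      obtain ⟨hGF, hGcard, hGinf⟩ := hG
      obtain ⟨x, y, hxy, rfl⟩ := Finset.card_eq_two.mp hGcard
      have hx : x ∈ F := hGF (Finset.mem_insert_self _ _)
      have hy : y ∈ F := hGF (Finset.mem_insert_of_mem (Finset.mem_singleton_self _))
      have hinf : ({x, y} : Finset (Finset (Fin n))).inf id = x ∩ y := by
        rw [Finset.inf_insert, Finset.inf_singleton]; rfl
      rw [hinf] at hGinf
      have e : (pairSet n i F).filter (fun p => ({p.1, p.2} : Finset (Finset (Fin n))) = {x, y})
          = {(x, y), (y, x)} := by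
        ext p
        simp only [Finset.mem_filter, pairSet, Finset.mem_product, Finset.mem_insert,
          Finset.mem_singleton]
        constructor
        · rintro ⟨⟨⟨hp1, hp2⟩, hne, hcard⟩, hset⟩
          have h1 : p.1 ∈ ({x, y} : Finset (Finset (Fin n))) := by
            rw [← hset]; exact Finset.mem_insert_self _ _
          have h2 : p.2 ∈ ({x, y} : Finset (Finset (Fin n))) := by
            rw [← hset]; exact Finset.mem_insert_of_mem (Finset.mem_singleton_self _)
          simp only [Finset.mem_insert, Finset.mem_singleton] at h1 h2
          rcases h1 with h1 | h1 <;> rcases h2 with h2 | h2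
          · exact absurd (h1.trans h2.symm) hne
          · left; rw [Prod.ext_iff]; exact ⟨h1, h2⟩
          · right; rw [Prod.ext_iff]; exact ⟨h1, h2⟩
          · exact absurd (h1.trans h2.symm) hne
        · rintro (rfl | rfl)
          · exact ⟨⟨⟨hx, hy⟩, hxy, hGinf⟩, rfl⟩
          · refine ⟨⟨⟨hy, hx⟩, fun h => hxy h.symm, by rwa [Finset.inter_comm]⟩, ?_⟩
            exact Finset.pair_comm y x
      rw [e]
      rw [Finset.card_insert_of_notMem, Finset.card_singleton]
      simp only [Finset.mem_singleton]
      intro h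
      rw [Prod.ext_iff] at h
      exact hxy h.1
  · intro p hp
    have hp : p ∈ pairSet n i F := hp
    simp only [pairSet, Finset.mem_filter, Finset.mem_product] at hp
    obtain ⟨⟨hp1, hp2⟩, hne, hcard⟩ := hp
    simp only [Finset.mem_coe, Finset.mem_filter, Finset.mem_powerset]
    refine ⟨?_, ?_, ?_⟩
    · intro A hA
      simp only [Finset.mem_insert, Finset.mem_singleton] at hA
      rcases hA with rfl | rfl
      · exact hp1
      · exact hp2
    · rw [Finset.card_insert_of_notMem (by simpa using hne), Finset.card_singleton]
    · rw [Finset.inf_insert, Finset.inf_singleton]; exact hcard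

lemma pairSet_empty_small {n i : ℕ} (hsmall : n ≤ i + 1) (F : Finset (Finset (Fin n)))
    (hF : IsAntichain (· ⊆ ·) (↑F : Set (Finset (Fin n)))) : pairSet n i F = ∅ := by
  rw [Finset.eq_empty_iff_forall_notMem]
  intro p hp
  simp only [pairSet, Finset.mem_filter, Finset.mem_product] at hp
  obtain ⟨⟨hp1, hp2⟩, hne, hcard⟩ := hp
  have key : ∀ A B : Finset (Fin n), A ∈ F → B ∈ F → A ≠ B → (A ∩ B).card = i → A = univ := by
    intro A B hA hB hAB hABc
    have h1 : i ≤ A.card := hABc ▸ Finset.card_le_card Finset.inter_subset_left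
    have h2 : A.card ≤ n := by
      calc A.card ≤ Fintype.card (Fin n) := Finset.card_le_univ _
        _ = n := Fintype.card_fin n
    have h3 : A.card ≠ i := by
      intro h
      have : A ∩ B = A := Finset.eq_of_subset_of_card_le Finset.inter_subset_left (by omega)
      have hsub : A ⊆ B := by rw [← Finset.inter_eq_left]; exact this
      exact (hF hA hB hAB) hsub
    have : A.card = n := by omega
    exact Finset.eq_univ_of_card A (by rw [this, Fintype.card_fin])
  have e1 := key p.1 p.2 hp1 hp2 hne hcard
  have e2 := key p.2 p.1 hp2 hp1 (fun h => hne h.symm) (by rwa [Finset.inter_comm])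
  exact hne (e1.trans e2.symm)


theorem statement10 (n : ℕ) (hn : 1 ≤ n) (i : ℕ) (hi : i ≤ n)
    (F : Finset (Finset (Fin n)))
    (hF : IsAntichain (· ⊆ ·) (↑F : Set (Finset (Fin n)))) :
    betaCount 2 n i F ≤
      betaCount 2 n i (level n
        (if (n - i) % 3 = 2 then i + ((n - i) + 2) / 3 else i + (n - i) / 3)) := by
  set j := (if (n - i) % 3 = 2 then i + ((n - i) + 2) / 3 else i + (n - i) / 3) with hj
  by_cases hsmall : n ≤ i + 1
  · have h0 := doubling n i F
    rw [pairSet_empty_small hsmall F hF, Finset.card_empty] at h0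
    have : betaCount 2 n i F = 0 := by omega
    rw [this]
    exact Nat.zero_le _
  · have hcase : (j = i + ((n-i)+2)/3 ∧ (n-i)%3 = 2) ∨ (j = i + (n-i)/3 ∧ (n-i)%3 ≠ 2) := by
      by_cases hr : (n-i)%3 = 2
      · left; exact ⟨by rw [hj, if_pos hr], hr⟩
      · right; exact ⟨by rw [hj, if_neg hr], hr⟩
    have hij : i < j := by rcases hcase with ⟨h, h'⟩ | ⟨h, h'⟩ <;> omega
    have h2 : i + 2*(j-i) ≤ n := by rcases hcase with ⟨h, h'⟩ | ⟨h, h'⟩ <;> omega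
    set W : ℕ := i ! * (((n-i)/3)! * (((n-i)+1)/3)! * (((n-i)+2)/3)!) with hW
    have hlow : ∀ p ∈ pairSet n i F, W ≤ (compatSet i p).card := by
      intro p hp
      simp only [pairSet, Finset.mem_filter, Finset.mem_product] at hp
      obtain ⟨⟨hp1, hp2⟩, hne, hcard⟩ := hp
      have hcc := compat_card p.1 p.2 hcard
      have hi1 : i ≤ p.1.card := hcard ▸ Finset.card_le_card Finset.inter_subset_left
      have hi2 : i ≤ p.2.card := hcard ▸ Finset.card_le_card Finset.inter_subset_right
      have hun : p.1.card + (p.2.card - i) ≤ n := by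
        have h' := Finset.card_inter_add_card_union p.1 p.2
        have h'' : (p.1 ∪ p.2).card ≤ n := by
          calc (p.1 ∪ p.2).card ≤ Fintype.card (Fin n) := Finset.card_le_univ _
            _ = n := Fintype.card_fin n
        omega
      have hA : (p.1.card - i) + (p.2.card - i) + (n - (p.1.card + (p.2.card - i))) = n - i := by
        omega
      have hbal := fact_balanced (p.1.card - i) (p.2.card - i)
        (n - (p.1.card + (p.2.card - i))) (n - i) hA
      have step : W ≤ i ! * ((p.1.card - i)! * ((p.2.card - i)! *
          ((n - (p.1.card + (p.2.card - i)))!))) := by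
        calc W ≤ i ! * ((p.1.card - i)! * (p.2.card - i)! *
              (n - (p.1.card + (p.2.card - i)))!) := Nat.mul_le_mul_left (i !) hbal
          _ = i ! * ((p.1.card - i)! * ((p.2.card - i)! *
              ((n - (p.1.card + (p.2.card - i)))!))) := by ring
      exact le_of_le_of_eq step hcc.symm
    have hup : ∀ q ∈ pairSet n i (level n j), (compatSet i q).card ≤ W := by
      intro q hq
      simp only [pairSet, Finset.mem_filter, Finset.mem_product] at hq
      obtain ⟨⟨hq1, hq2⟩, hne, hcard⟩ := hq
      simp only [level, Finset.mem_filter, Finset.mem_univ, true_and] at hq1 hq2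
      have hcc := compat_card q.1 q.2 hcard
      rw [hq1, hq2] at hcc
      have harith : ((j - i = (n-i)/3 ∧ j - i = ((n-i)+1)/3 ∧ n - (j + (j-i)) = ((n-i)+2)/3)
          ∨ (j - i = ((n-i)+1)/3 ∧ j - i = ((n-i)+2)/3 ∧ n - (j + (j-i)) = (n-i)/3)) := by
        rcases hcase with ⟨h, h'⟩ | ⟨h, h'⟩ <;> omega
      have heq : (compatSet i q).card = W := by
        rcases harith with ⟨e1, e2, e3⟩ | ⟨e1, e2, e3⟩
        · calc (compatSet i q).card
              = i ! * ((j-i)! * ((j-i)! * (n - (j + (j-i)))!)) := hcc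
            _ = W := by
              rw [hW, e3, e1, ← (e1.symm.trans e2)]; ring
        · calc (compatSet i q).card
              = i ! * ((j-i)! * ((j-i)! * (n - (j + (j-i)))!)) := hcc
            _ = W := by
              rw [hW, e3, e1, ← (e1.symm.trans e2)]; ring
      exact le_of_eq heq
    have key1 : (pairSet n i F).card * W ≤ n ! := by
      calc (pairSet n i F).card * W = (pairSet n i F).card • W := (smul_eq_mul _ _).symm
        _ ≤ ∑ p ∈ pairSet n i F, (compatSet i p).card :=
            Finset.card_nsmul_le_sum _ _ _ hlow
        _ = ((pairSet n i F).biUnion (compatSet i)).card :=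
            (Finset.card_biUnion (compat_disjoint hF)).symm
        _ ≤ Fintype.card (Equiv.Perm (Fin n)) := Finset.card_le_univ _
        _ = n ! := by rw [Fintype.card_perm, Fintype.card_fin]
    have key2 : n ! ≤ (pairSet n i (level n j)).card * W := by
      have hsub : (univ : Finset (Equiv.Perm (Fin n)))
          ⊆ (pairSet n i (level n j)).biUnion (compatSet i) := by
        intro σ _
        obtain ⟨q, hq, hcq⟩ := covering hij h2 σ
        exact Finset.mem_biUnion.2 ⟨q, hq, hcq⟩
      calc n ! = Fintype.card (Equiv.Perm (Fin n)) := by rw [Fintype.card_perm, Fintype.card_fin]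
        _ = (univ : Finset (Equiv.Perm (Fin n))).card := Finset.card_univ.symm
        _ ≤ ((pairSet n i (level n j)).biUnion (compatSet i)).card := Finset.card_le_card hsub
        _ = ∑ q ∈ pairSet n i (level n j), (compatSet i q).card :=
            Finset.card_biUnion (compat_disjoint (level_antichain n j))
        _ ≤ (pairSet n i (level n j)).card • W := Finset.sum_le_card_nsmul _ _ _ hup
        _ = (pairSet n i (level n j)).card * W := smul_eq_mul _ _
    have hWpos : 0 < W := by
      rw [hW]
      exact Nat.mul_pos (Nat.factorial_pos i) (Nat.mul_pos (Nat.mul_pos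
        (Nat.factorial_pos _) (Nat.factorial_pos _)) (Nat.factorial_pos _))
    have hcards : (pairSet n i F).card ≤ (pairSet n i (level n j)).card :=
      Nat.le_of_mul_le_mul_right (key1.trans key2) hWpos
    have d1 := doubling n i F
    have d2 := doubling n i (level n j)
    omega


end
end

section
/- Let Q_1 and Q_2 be non-empty finite posets. Then for every n ≥ 1, La(n, P_{l(Q_1)+l(Q_2)+1}, Q_1 ⊗_1 Q_2) ≤ max over 0 ≤ j ≤ n of C(n,j) · La(j, P_{l(Q_1)+1}, Q_1) · La(n−j, P_{l(Q_2)+1}, Q_2). -/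
open Classical Finset

noncomputable section

section Helpers

variable {n : ℕ}

/-- enumerate a chain of finsets strictly monotonically -/
lemma chain_enum {m : ℕ} (S : Finset (Finset (Fin n)))
    (hS : IsChain (· ⊆ ·) (↑S : Set (Finset (Fin n)))) (hm : m ≤ S.card) :
    ∃ ψ : Fin m → Finset (Fin n), (∀ i, ψ i ∈ S) ∧ ∀ i j : Fin m, i < j → ψ i ⊂ ψ j := by
  classical
  obtain ⟨S', hS'S, hS'card⟩ := Finset.exists_subset_card_eq hm
  have hS' : IsChain (· ⊆ ·) (↑S' : Set (Finset (Fin n))) :=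
    hS.mono (by exact_mod_cast hS'S)
  have hinj : Set.InjOn Finset.card (↑S' : Set (Finset (Fin n))) := by
    intro A hA B hB hAB
    rcases eq_or_ne A B with h | h
    · exact h
    · rcases hS' hA hB h with hsub | hsub
      · exact Finset.eq_of_subset_of_card_le hsub (le_of_eq hAB.symm)
      · exact (Finset.eq_of_subset_of_card_le hsub (le_of_eq hAB)).symm
  have hT : (S'.image Finset.card).card = m := by
    rw [Finset.card_image_of_injOn hinj, hS'card]
  set e := (S'.image Finset.card).orderIsoOfFin hT with he
  have hmem : ∀ i : Fin m, ∃ A ∈ S', A.card = (e i : ℕ) := by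
    intro i
    have := (e i).2
    rwa [Finset.mem_image] at this
  choose ψ hψS hψc using hmem
  refine ⟨ψ, fun i => hS'S (hψS i), fun i j hij => ?_⟩
  have hc : (ψ i).card < (ψ j).card := by
    rw [hψc i, hψc j]
    exact_mod_cast (e.lt_iff_lt.mpr hij)
  have hne : ψ i ≠ ψ j := fun h => by rw [h] at hc; exact lt_irrefl _ hc
  rcases hS' (by exact_mod_cast hψS i) (by exact_mod_cast hψS j) hne with h | h
  · exact Finset.ssubset_iff_subset_ne.mpr ⟨h, hne⟩
  · exact absurd (Finset.card_le_card h) (not_le.mpr hc)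

/-- a chain of `≥ m` finsets inside `F` yields a copy of the `m`-chain in `F` -/
lemma chain_copy {m : ℕ} (F S : Finset (Finset (Fin n))) (hSF : S ⊆ F)
    (hS : IsChain (· ⊆ ·) (↑S : Set (Finset (Fin n)))) (hm : m ≤ S.card) :
    copyCount (PChain m) F ≠ 0 := by
  classical
  obtain ⟨ψ, hψS, hψ⟩ := chain_enum S hS hm
  have hinj : Function.Injective ψ := by
    intro i j hij
    rcases lt_trichotomy i j with h | h | h
    · exact absurd hij (hψ i j h).ne
    · exact h
    · exact absurd hij.symm (hψ j i h).ne
  have hG : (Finset.univ.image ψ) ∈ F.powerset.filter fun G => IsCopy (PChain m) G := by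
    rw [Finset.mem_filter, Finset.mem_powerset]
    refine ⟨?_, ψ, hinj, rfl, ?_⟩
    · intro A hA
      rw [Finset.mem_image] at hA
      obtain ⟨i, _, rfl⟩ := hA
      exact hSF (hψS i)
    · intro i j hij
      rcases lt_or_eq_of_le hij with h | h
      · exact (hψ i j h).subset
      · rw [h]
  exact Finset.card_ne_zero_of_mem hG

/-- every finite poset has a chain of size its height -/
lemma exists_height_chain (α : Type) [PartialOrder α] [Fintype α] :
    ∃ C : Finset α, IsChain (· ≤ ·) (↑C : Set α) ∧ C.card = height α := by
  classical
  have hne : ((Finset.univ : Finset (Finset α)).filter fun C : Finset α =>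
      IsChain (· ≤ ·) (↑C : Set α)).Nonempty := by
    refine ⟨∅, ?_⟩
    simp [Set.Pairwise, IsChain]
  obtain ⟨C, hC, hval⟩ := Finset.exists_mem_eq_sup _ hne Finset.card
  rw [Finset.mem_filter] at hC
  exact ⟨C, hC.2, hval.symm⟩

/-- from a monotone injection of a poset `α` into finsets, extract a chain of finsets
of size `height α`, all in the image -/
lemma copy_chainset {α : Type} [PartialOrder α] [Fintype α]
    (φ : α → Finset (Fin n)) (hinj : Function.Injective φ)
    (hmono : ∀ x y : α, x ≤ y → φ x ⊆ φ y) :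
    ∃ S : Finset (Finset (Fin n)), (∀ A ∈ S, ∃ x : α, A = φ x) ∧
      IsChain (· ⊆ ·) (↑S : Set (Finset (Fin n))) ∧ S.card = height α := by
  classical
  obtain ⟨C, hC, hCcard⟩ := exists_height_chain α
  refine ⟨C.image φ, ?_, ?_, ?_⟩
  · intro A hA
    rw [Finset.mem_image] at hA
    obtain ⟨x, _, rfl⟩ := hA
    exact ⟨x, rfl⟩
  · intro A hA B hB hAB
    simp only [Finset.coe_image, Set.mem_image, Finset.mem_coe] at hA hB
    obtain ⟨x, hx, rfl⟩ := hA
    obtain ⟨y, hy, rfl⟩ := hB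
    have hxy : x ≠ y := fun h => hAB (by rw [h])
    rcases hC hx hy hxy with h | h
    · exact Or.inl (hmono _ _ h)
    · exact Or.inr (hmono _ _ h)
  · rw [Finset.card_image_of_injective _ hinj, hCcard]

end Helpers
section Transfer

variable {n m : ℕ}

lemma le_La {k : ℕ} (P Q : Type) [PartialOrder P] [Fintype P] [PartialOrder Q] [Fintype Q]
    (H : Finset (Finset (Fin k))) (hH : copyCount P H = 0) :
    copyCount Q H ≤ La k P Q := by
  classical
  refine Finset.le_sup ?_
  rw [Finset.mem_filter]
  exact ⟨Finset.mem_univ _, hH⟩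

variable (f : Finset (Fin n) → Finset (Fin m)) (P : Finset (Fin n) → Prop)

/-- pull a chain copy back through `f` -/
lemma pullback_chain {k : ℕ}
    (hrefl : ∀ A B, P A → P B → f A ⊆ f B → A ⊆ B)
    (F' : Finset (Finset (Fin n))) (hP : ∀ A ∈ F', P A)
    (hc : copyCount (PChain k) (F'.image f) ≠ 0) :
    ∃ ψ : Fin k → Finset (Fin n), (∀ i, ψ i ∈ F') ∧ ∀ i j : Fin k, i < j → ψ i ⊂ ψ j := by
  classical
  rw [copyCount] at hc
  obtain ⟨G, hG⟩ := Finset.card_ne_zero.mp hc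
  rw [Finset.mem_filter, Finset.mem_powerset] at hG
  obtain ⟨hGsub, φ', hinj, himg, hmono⟩ := hG
  have hmem : ∀ i : Fin k, ∃ A ∈ F', f A = φ' i := by
    intro i
    have h1 : φ' i ∈ F'.image f := by
      refine hGsub ?_
      rw [← himg]
      exact Finset.mem_image_of_mem _ (Finset.mem_univ i)
    rwa [Finset.mem_image] at h1
  choose ψ hψF hψf using hmem
  refine ⟨ψ, hψF, fun i j hij => ?_⟩
  have hsub : ψ i ⊆ ψ j := by
    refine hrefl _ _ (hP _ (hψF i)) (hP _ (hψF j)) ?_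
    rw [hψf i, hψf j]
    exact hmono i j (le_of_lt hij)
  refine Finset.ssubset_iff_subset_ne.mpr ⟨hsub, fun h => ?_⟩
  have : φ' i = φ' j := by rw [← hψf i, ← hψf j, h]
  exact absurd (hinj this) (ne_of_lt hij)

/-- push a copy forward through `f` -/
lemma image_copy {α : Type} [PartialOrder α] [Fintype α]
    (hmono : ∀ A B : Finset (Fin n), A ⊆ B → f A ⊆ f B)
    (hrefl : ∀ A B, P A → P B → f A ⊆ f B → A ⊆ B)
    (F' : Finset (Finset (Fin n))) (hP : ∀ A ∈ F', P A)
    (φ : α → Finset (Fin n)) (hinj : Function.Injective φ)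
    (hm : ∀ x y : α, x ≤ y → φ x ⊆ φ y) (hmem : ∀ x, φ x ∈ F') :
    ((Finset.univ.image φ).image f) ∈ (F'.image f).powerset.filter fun G => IsCopy α G := by
  classical
  have hPφ : ∀ x, P (φ x) := fun x => hP _ (hmem x)
  rw [Finset.mem_filter, Finset.mem_powerset]
  refine ⟨?_, f ∘ φ, ?_, ?_, ?_⟩
  · refine Finset.image_subset_image ?_
    intro A hA
    rw [Finset.mem_image] at hA
    obtain ⟨x, _, rfl⟩ := hA
    exact hmem x
  · intro x y hxy
    simp only [Function.comp_apply] at hxy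
    refine hinj (le_antisymm ?_ ?_)
    · exact hrefl _ _ (hPφ x) (hPφ y) (le_of_eq hxy)
    · exact hrefl _ _ (hPφ y) (hPφ x) (le_of_eq hxy.symm)
  · rw [Finset.image_image]
  · intro x y hxy
    exact hmono _ _ (hm x y hxy)

/-- images under `f` determine the original families -/
lemma image_eq_recon {α : Type} [Fintype α]
    (hrefl : ∀ A B, P A → P B → f A ⊆ f B → A ⊆ B)
    (φ ψ : α → Finset (Fin n)) (hφ : ∀ x, P (φ x)) (hψ : ∀ x, P (ψ x))
    (h : (Finset.univ.image φ).image f = (Finset.univ.image ψ).image f) :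
    Finset.univ.image φ = Finset.univ.image ψ := by
  classical
  have key : ∀ (φ' ψ' : α → Finset (Fin n)), (∀ x, P (φ' x)) → (∀ x, P (ψ' x)) →
      (Finset.univ.image φ').image f = (Finset.univ.image ψ').image f →
      Finset.univ.image φ' ⊆ Finset.univ.image ψ' := by
    intro φ' ψ' hφ' hψ' h' A hA
    rw [Finset.mem_image] at hA
    obtain ⟨x, _, rfl⟩ := hA
    have h1 : f (φ' x) ∈ (Finset.univ.image ψ').image f := by
      rw [← h']
      exact Finset.mem_image_of_mem _ (Finset.mem_image_of_mem _ (Finset.mem_univ x))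
    rw [Finset.mem_image] at h1
    obtain ⟨B, hB, hfB⟩ := h1
    rw [Finset.mem_image] at hB
    obtain ⟨y, _, rfl⟩ := hB
    have : φ' x = ψ' y := by
      refine le_antisymm ?_ ?_
      · exact hrefl _ _ (hφ' x) (hψ' y) (le_of_eq hfB.symm)
      · exact hrefl _ _ (hψ' y) (hφ' x) (le_of_eq hfB)
    rw [this]
    exact Finset.mem_image_of_mem _ (Finset.mem_univ y)
  exact le_antisymm (key φ ψ hφ hψ h) (key ψ φ hψ hφ h.symm)

end Transfer
section OtimesFacts

variable {Q₁ Q₂ : Type} [PartialOrder Q₁] [PartialOrder Q₂] {r : ℕ}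

lemma otimes_bot_le_mid (a : Q₁) (i : Fin r) :
    (Otimes.bot a : Otimes Q₁ Q₂ r) ≤ Otimes.mid i := trivial

lemma otimes_mid_le_top (i : Fin r) (b : Q₂) :
    (Otimes.mid i : Otimes Q₁ Q₂ r) ≤ Otimes.top b := trivial

lemma otimes_bot_le_bot {a b : Q₁} (h : a ≤ b) :
    (Otimes.bot a : Otimes Q₁ Q₂ r) ≤ Otimes.bot b := h

lemma otimes_top_le_top {a b : Q₂} (h : a ≤ b) :
    (Otimes.top a : Otimes Q₁ Q₂ r) ≤ Otimes.top b := h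

lemma otimes_bot_inj : Function.Injective (Otimes.bot : Q₁ → Otimes Q₁ Q₂ r) := by
  intro a b h; injection h

lemma otimes_top_inj : Function.Injective (Otimes.top : Q₂ → Otimes Q₁ Q₂ r) := by
  intro a b h; injection h

lemma otimes_decomp {n : ℕ} [Fintype Q₁] [Fintype Q₂]
    (φ : Otimes Q₁ Q₂ 1 → Finset (Fin n)) :
    Finset.univ.image φ =
      (Finset.univ.image (φ ∘ Otimes.bot)) ∪
        insert (φ (Otimes.mid 0)) (Finset.univ.image (φ ∘ Otimes.top)) := by
  classical
  ext A
  simp only [Finset.mem_union, Finset.mem_insert, Finset.mem_image, Finset.mem_univ,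
    true_and, Function.comp_apply]
  constructor
  · rintro ⟨z, rfl⟩
    match z with
    | Otimes.bot a => exact Or.inl ⟨a, rfl⟩
    | Otimes.mid i => exact Or.inr (Or.inl (by rw [Subsingleton.elim (0 : Fin 1) i]))
    | Otimes.top b => exact Or.inr (Or.inr ⟨b, rfl⟩)
  · rintro (⟨a, rfl⟩ | h | ⟨b, rfl⟩)
    · exact ⟨Otimes.bot a, rfl⟩
    · exact ⟨Otimes.mid 0, h.symm⟩
    · exact ⟨Otimes.top b, rfl⟩

end OtimesFacts
section Maps

variable {n : ℕ}

/-- compress a subset of `M` into the cube of dimension `M.card` -/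
def subMap (M : Finset (Fin n)) : Finset (Fin n) → Finset (Fin M.card) :=
  fun A => Finset.univ.filter fun i => ((M.orderIsoOfFin rfl) i : Fin n) ∈ A

lemma subMap_mono (M : Finset (Fin n)) {A B : Finset (Fin n)} (h : A ⊆ B) :
    subMap M A ⊆ subMap M B := by
  intro i hi
  rw [subMap, Finset.mem_filter] at hi ⊢
  exact ⟨hi.1, h hi.2⟩

lemma subMap_refl (M : Finset (Fin n)) {A B : Finset (Fin n)} (hA : A ⊆ M)
    (h : subMap M A ⊆ subMap M B) : A ⊆ B := by
  intro x hx
  have hxM : x ∈ M := hA hx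
  set i := (M.orderIsoOfFin rfl).symm ⟨x, hxM⟩ with hi
  have hval : ((M.orderIsoOfFin rfl) i : Fin n) = x := by
    rw [hi, OrderIso.apply_symm_apply]
  have h1 : i ∈ subMap M A := by
    rw [subMap, Finset.mem_filter, hval]
    exact ⟨Finset.mem_univ _, hx⟩
  have h2 := h h1
  rw [subMap, Finset.mem_filter, hval] at h2
  exact h2.2

lemma compl_card (M : Finset (Fin n)) : Mᶜ.card = n - M.card := by
  rw [Finset.card_compl, Fintype.card_fin]

/-- compress a superset of `M` into the cube of dimension `n - M.card` -/
def compMap (M : Finset (Fin n)) : Finset (Fin n) → Finset (Fin (n - M.card)) :=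
  fun A => Finset.univ.filter fun i => ((Mᶜ.orderIsoOfFin (compl_card M)) i : Fin n) ∈ A

lemma compMap_mono (M : Finset (Fin n)) {A B : Finset (Fin n)} (h : A ⊆ B) :
    compMap M A ⊆ compMap M B := by
  intro i hi
  rw [compMap, Finset.mem_filter] at hi ⊢
  exact ⟨hi.1, h hi.2⟩

lemma compMap_refl (M : Finset (Fin n)) {A B : Finset (Fin n)} (hA : M ⊆ A) (hB : M ⊆ B)
    (h : compMap M A ⊆ compMap M B) : A ⊆ B := by
  intro x hx
  by_cases hxM : x ∈ M
  · exact hB hxM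
  · have hxc : x ∈ Mᶜ := Finset.mem_compl.mpr hxM
    set i := (Mᶜ.orderIsoOfFin (compl_card M)).symm ⟨x, hxc⟩ with hi
    have hval : ((Mᶜ.orderIsoOfFin (compl_card M)) i : Fin n) = x := by
      rw [hi, OrderIso.apply_symm_apply]
    have h1 : i ∈ compMap M A := by
      rw [compMap, Finset.mem_filter, hval]
      exact ⟨Finset.mem_univ _, hx⟩
    have h2 := h h1
    rw [compMap, Finset.mem_filter, hval] at h2
    exact h2.2

end Maps
section Glue

variable {n : ℕ}

lemma chain_glue (S₁ S₂ : Finset (Finset (Fin n)))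
    (h₁ : IsChain (· ⊆ ·) (↑S₁ : Set (Finset (Fin n))))
    (h₂ : IsChain (· ⊆ ·) (↑S₂ : Set (Finset (Fin n))))
    (hlt : ∀ A ∈ S₁, ∀ B ∈ S₂, A ⊂ B) :
    IsChain (· ⊆ ·) (↑(S₁ ∪ S₂) : Set (Finset (Fin n))) ∧
      (S₁ ∪ S₂).card = S₁.card + S₂.card := by
  constructor
  · intro A hA B hB hAB
    rw [Finset.coe_union, Set.mem_union] at hA hB
    rcases hA with hA | hA <;> rcases hB with hB | hB
    · exact h₁ hA hB hAB
    · exact Or.inl (hlt A hA B hB).subset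
    · exact Or.inr (hlt B hB A hA).subset
    · exact h₂ hA hB hAB
  · refine Finset.card_union_of_disjoint ?_
    rw [Finset.disjoint_left]
    intro A hA hA2
    exact (hlt A hA A hA2).ne rfl

lemma chain_singleton (M : Finset (Fin n)) :
    IsChain (· ⊆ ·) (↑({M} : Finset (Finset (Fin n))) : Set (Finset (Fin n))) := by
  rw [Finset.coe_singleton]
  exact Set.pairwise_singleton _ _

end Glue

section Middle

variable {Q₁ Q₂ : Type} [PartialOrder Q₁] [Fintype Q₁] [PartialOrder Q₂] [Fintype Q₂] {n : ℕ}

/-- `M` is the middle set of some copy of `Q₁ ⊗₁ Q₂` in `F` -/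
def IsMiddle (F : Finset (Finset (Fin n))) (M : Finset (Fin n)) : Prop :=
  ∃ φ : Otimes Q₁ Q₂ 1 → Finset (Fin n), Function.Injective φ ∧ (∀ z, φ z ∈ F) ∧
    (∀ x y : Otimes Q₁ Q₂ 1, x ≤ y → φ x ⊆ φ y) ∧ φ (Otimes.mid 0) = M

variable {F : Finset (Finset (Fin n))} {M : Finset (Fin n)}

lemma IsMiddle.mem (h : IsMiddle (Q₁ := Q₁) (Q₂ := Q₂) F M) : M ∈ F := by
  obtain ⟨φ, -, hmem, -, hmid⟩ := h
  rw [← hmid]; exact hmem _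

lemma IsMiddle.botchain (h : IsMiddle (Q₁ := Q₁) (Q₂ := Q₂) F M) :
    ∃ S : Finset (Finset (Fin n)), (∀ A ∈ S, A ∈ F ∧ A ⊂ M) ∧
      IsChain (· ⊆ ·) (↑S : Set (Finset (Fin n))) ∧ S.card = height Q₁ := by
  obtain ⟨φ, hinj, hmem, hmono, hmid⟩ := h
  obtain ⟨S, hSmem, hSchain, hScard⟩ := copy_chainset (φ ∘ Otimes.bot)
    (fun a b hab => otimes_bot_inj (hinj hab))
    (fun a b hab => hmono _ _ (otimes_bot_le_bot hab))
  refine ⟨S, fun A hA => ?_, hSchain, hScard⟩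
  obtain ⟨a, rfl⟩ := hSmem A hA
  refine ⟨hmem _, ?_⟩
  rw [← hmid]
  refine Finset.ssubset_iff_subset_ne.mpr ⟨hmono _ _ (otimes_bot_le_mid a 0), fun hEq => ?_⟩
  cases hinj hEq

lemma IsMiddle.topchain (h : IsMiddle (Q₁ := Q₁) (Q₂ := Q₂) F M) :
    ∃ S : Finset (Finset (Fin n)), (∀ A ∈ S, A ∈ F ∧ M ⊂ A) ∧
      IsChain (· ⊆ ·) (↑S : Set (Finset (Fin n))) ∧ S.card = height Q₂ := by
  obtain ⟨φ, hinj, hmem, hmono, hmid⟩ := h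
  obtain ⟨S, hSmem, hSchain, hScard⟩ := copy_chainset (φ ∘ Otimes.top)
    (fun a b hab => otimes_top_inj (hinj hab))
    (fun a b hab => hmono _ _ (otimes_top_le_top hab))
  refine ⟨S, fun A hA => ?_, hSchain, hScard⟩
  obtain ⟨a, rfl⟩ := hSmem A hA
  refine ⟨hmem _, ?_⟩
  rw [← hmid]
  refine Finset.ssubset_iff_subset_ne.mpr ⟨hmono _ _ (otimes_mid_le_top 0 a), fun hEq => ?_⟩
  cases hinj hEq.symm

/-- middles of copies form an antichain when `F` is chain-free -/
lemma middle_antichain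
    (hfree : copyCount (PChain (height Q₁ + height Q₂ + 1)) F = 0)
    {M M' : Finset (Fin n)} (hM : IsMiddle (Q₁ := Q₁) (Q₂ := Q₂) F M)
    (hM' : IsMiddle (Q₁ := Q₁) (Q₂ := Q₂) F M') (hne : M ≠ M') (hsub : M ⊆ M') : False := by
  classical
  obtain ⟨S₁, hS₁, hc₁, hcard₁⟩ := hM.botchain
  obtain ⟨S₂, hS₂, hc₂, hcard₂⟩ := hM'.topchain
  have hMM' : M ⊂ M' := Finset.ssubset_iff_subset_ne.mpr ⟨hsub, hne⟩
  obtain ⟨hg1, hg1c⟩ := chain_glue {M'} S₂ (chain_singleton M') hc₂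
    (by intro A hA B hB
        rw [Finset.mem_singleton] at hA
        subst hA
        exact (hS₂ B hB).2)
  obtain ⟨hg2, hg2c⟩ := chain_glue {M} ({M'} ∪ S₂) (chain_singleton M) hg1
    (by intro A hA B hB
        rw [Finset.mem_singleton] at hA
        subst hA
        rcases Finset.mem_union.mp hB with hB | hB
        · rw [Finset.mem_singleton] at hB; subst hB; exact hMM'
        · exact hMM'.trans (hS₂ B hB).2)
  obtain ⟨hg3, hg3c⟩ := chain_glue S₁ ({M} ∪ ({M'} ∪ S₂)) hc₁ hg2
    (by intro A hA B hB
        have hAM : A ⊂ M := (hS₁ A hA).2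
        rcases Finset.mem_union.mp hB with hB | hB
        · rw [Finset.mem_singleton] at hB; subst hB; exact hAM
        rcases Finset.mem_union.mp hB with hB | hB
        · rw [Finset.mem_singleton] at hB; subst hB; exact hAM.trans hMM'
        · exact hAM.trans (hMM'.trans (hS₂ B hB).2))
  refine chain_copy F (S₁ ∪ ({M} ∪ ({M'} ∪ S₂))) ?_ hg3 ?_ hfree
  · intro A hA
    rcases Finset.mem_union.mp hA with hA | hA
    · exact (hS₁ A hA).1
    rcases Finset.mem_union.mp hA with hA | hA
    · rw [Finset.mem_singleton] at hA; subst hA; exact hM.mem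
    rcases Finset.mem_union.mp hA with hA | hA
    · rw [Finset.mem_singleton] at hA; subst hA; exact hM'.mem
    · exact (hS₂ A hA).1
  · rw [hg3c, hg2c, hg1c, hcard₁, hcard₂, Finset.card_singleton, Finset.card_singleton]
    omega

end Middle
section Free

variable {Q₁ Q₂ : Type} [PartialOrder Q₁] [Fintype Q₁] [PartialOrder Q₂] [Fintype Q₂] {n : ℕ}
variable {F : Finset (Finset (Fin n))} {M : Finset (Fin n)}

lemma middle_F1_free
    (hfree : copyCount (PChain (height Q₁ + height Q₂ + 1)) F = 0)
    (hM : IsMiddle (Q₁ := Q₁) (Q₂ := Q₂) F M) :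
    copyCount (PChain (height Q₁ + 1))
      ((F.filter fun A => A ⊂ M).image (subMap M)) = 0 := by
  classical
  by_contra hc
  obtain ⟨ψ, hψmem, hψ⟩ := pullback_chain (subMap M) (fun A => A ⊆ M)
    (fun A B hA _ h => subMap_refl M hA h) (F.filter fun A => A ⊂ M)
    (fun A hA => ((Finset.mem_filter.mp hA).2).subset) hc
  have hψinj : Function.Injective ψ := by
    intro i j hij
    rcases lt_trichotomy i j with h | h | h
    · exact absurd hij (hψ i j h).ne
    · exact h
    · exact absurd hij.symm (hψ j i h).ne
  have hbotchain : IsChain (· ⊆ ·) (↑(Finset.univ.image ψ) : Set (Finset (Fin n))) := by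
    intro A hA B hB hAB
    simp only [Finset.coe_image, Set.mem_image] at hA hB
    obtain ⟨i, -, rfl⟩ := hA
    obtain ⟨j, -, rfl⟩ := hB
    have hij : i ≠ j := fun h => hAB (by rw [h])
    rcases lt_or_gt_of_ne hij with h | h
    · exact Or.inl (hψ i j h).subset
    · exact Or.inr (hψ j i h).subset
  have hbotcard : (Finset.univ.image ψ).card = height Q₁ + 1 := by
    rw [Finset.card_image_of_injective _ hψinj, Finset.card_univ, Fintype.card_fin]
  obtain ⟨S₂, hS₂, hc₂, hcard₂⟩ := hM.topchain
  obtain ⟨hg1, hg1c⟩ := chain_glue {M} S₂ (chain_singleton M) hc₂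
    (by intro A hA B hB
        rw [Finset.mem_singleton] at hA
        subst hA
        exact (hS₂ B hB).2)
  obtain ⟨hg2, hg2c⟩ := chain_glue (Finset.univ.image ψ) ({M} ∪ S₂) hbotchain hg1
    (by intro A hA B hB
        obtain ⟨i, -, rfl⟩ := Finset.mem_image.mp hA
        have hAM : ψ i ⊂ M := (Finset.mem_filter.mp (hψmem i)).2
        rcases Finset.mem_union.mp hB with hB | hB
        · rw [Finset.mem_singleton] at hB; subst hB; exact hAM
        · exact hAM.trans (hS₂ B hB).2)
  refine chain_copy F (Finset.univ.image ψ ∪ ({M} ∪ S₂)) ?_ hg2 ?_ hfree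
  · intro A hA
    rcases Finset.mem_union.mp hA with hA | hA
    · obtain ⟨i, -, rfl⟩ := Finset.mem_image.mp hA
      exact (Finset.mem_filter.mp (hψmem i)).1
    rcases Finset.mem_union.mp hA with hA | hA
    · rw [Finset.mem_singleton] at hA; subst hA; exact hM.mem
    · exact (hS₂ A hA).1
  · rw [hg2c, hg1c, hbotcard, hcard₂, Finset.card_singleton]
    omega

lemma middle_F2_free
    (hfree : copyCount (PChain (height Q₁ + height Q₂ + 1)) F = 0)
    (hM : IsMiddle (Q₁ := Q₁) (Q₂ := Q₂) F M) :
    copyCount (PChain (height Q₂ + 1))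
      ((F.filter fun A => M ⊂ A).image (compMap M)) = 0 := by
  classical
  by_contra hc
  obtain ⟨ψ, hψmem, hψ⟩ := pullback_chain (compMap M) (fun A => M ⊆ A)
    (fun A B hA hB h => compMap_refl M hA hB h) (F.filter fun A => M ⊂ A)
    (fun A hA => ((Finset.mem_filter.mp hA).2).subset) hc
  have hψinj : Function.Injective ψ := by
    intro i j hij
    rcases lt_trichotomy i j with h | h | h
    · exact absurd hij (hψ i j h).ne
    · exact h
    · exact absurd hij.symm (hψ j i h).ne
  have htopchain : IsChain (· ⊆ ·) (↑(Finset.univ.image ψ) : Set (Finset (Fin n))) := by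
    intro A hA B hB hAB
    simp only [Finset.coe_image, Set.mem_image] at hA hB
    obtain ⟨i, -, rfl⟩ := hA
    obtain ⟨j, -, rfl⟩ := hB
    have hij : i ≠ j := fun h => hAB (by rw [h])
    rcases lt_or_gt_of_ne hij with h | h
    · exact Or.inl (hψ i j h).subset
    · exact Or.inr (hψ j i h).subset
  have htopcard : (Finset.univ.image ψ).card = height Q₂ + 1 := by
    rw [Finset.card_image_of_injective _ hψinj, Finset.card_univ, Fintype.card_fin]
  obtain ⟨S₁, hS₁, hc₁, hcard₁⟩ := hM.botchain
  obtain ⟨hg1, hg1c⟩ := chain_glue {M} (Finset.univ.image ψ) (chain_singleton M) htopchain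
    (by intro A hA B hB
        rw [Finset.mem_singleton] at hA
        subst hA
        obtain ⟨i, -, rfl⟩ := Finset.mem_image.mp hB
        exact (Finset.mem_filter.mp (hψmem i)).2)
  obtain ⟨hg2, hg2c⟩ := chain_glue S₁ ({M} ∪ Finset.univ.image ψ) hc₁ hg1
    (by intro A hA B hB
        have hAM : A ⊂ M := (hS₁ A hA).2
        rcases Finset.mem_union.mp hB with hB | hB
        · rw [Finset.mem_singleton] at hB; subst hB; exact hAM
        · obtain ⟨i, -, rfl⟩ := Finset.mem_image.mp hB
          exact hAM.trans (Finset.mem_filter.mp (hψmem i)).2)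
  refine chain_copy F (S₁ ∪ ({M} ∪ Finset.univ.image ψ)) ?_ hg2 ?_ hfree
  · intro A hA
    rcases Finset.mem_union.mp hA with hA | hA
    · exact (hS₁ A hA).1
    rcases Finset.mem_union.mp hA with hA | hA
    · rw [Finset.mem_singleton] at hA; subst hA; exact hM.mem
    · obtain ⟨i, -, rfl⟩ := Finset.mem_image.mp hA
      exact (Finset.mem_filter.mp (hψmem i)).1
  · rw [hg2c, hg1c, htopcard, hcard₁, Finset.card_singleton]
    omega

end Free
section Fiber

variable (Q₁ Q₂ : Type) [PartialOrder Q₁] [Fintype Q₁] [PartialOrder Q₂] [Fintype Q₂] {n : ℕ}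

/-- the chosen middle set of a subfamily (meaningful when it is a copy of `Q₁ ⊗₁ Q₂`) -/
noncomputable def midOf (G : Finset (Finset (Fin n))) : Finset (Fin n) :=
  if h : IsCopy (Otimes Q₁ Q₂ 1) G then (Exists.choose h) (Otimes.mid 0) else ∅

variable {Q₁ Q₂}

lemma midOf_eq {G : Finset (Finset (Fin n))} (h : IsCopy (Otimes Q₁ Q₂ 1) G) :
    midOf Q₁ Q₂ G = (Exists.choose h) (Otimes.mid 0) := dif_pos h

variable {F : Finset (Finset (Fin n))}

lemma copy_isMiddle {G : Finset (Finset (Fin n))} (hGF : G ⊆ F)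
    (h : IsCopy (Otimes Q₁ Q₂ 1) G) : IsMiddle (Q₁ := Q₁) (Q₂ := Q₂) F (midOf Q₁ Q₂ G) := by
  obtain ⟨hinj, himg, hmono⟩ := Exists.choose_spec h
  refine ⟨Exists.choose h, hinj, fun z => ?_, hmono, (midOf_eq h).symm⟩
  have hz : (Exists.choose h) z ∈ Finset.image (Exists.choose h) Finset.univ :=
    Finset.mem_image_of_mem _ (Finset.mem_univ z)
  rw [himg] at hz
  exact hGF hz

lemma fiber_bound (hfree : copyCount (PChain (height Q₁ + height Q₂ + 1)) F = 0)
    (M : Finset (Fin n)) :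
    ((F.powerset.filter fun G => IsCopy (Otimes Q₁ Q₂ 1) G).filter
        fun G => midOf Q₁ Q₂ G = M).card ≤
      La M.card (PChain (height Q₁ + 1)) Q₁ *
        La (n - M.card) (PChain (height Q₂ + 1)) Q₂ := by
  classical
  set fib := (F.powerset.filter fun G => IsCopy (Otimes Q₁ Q₂ 1) G).filter
    fun G => midOf Q₁ Q₂ G = M with hfib
  rcases Finset.eq_empty_or_nonempty fib with hemp | ⟨G₀, hG₀⟩
  · rw [hemp]; simp
  -- M is a middle
  have hG₀' := hG₀
  rw [hfib, Finset.mem_filter, Finset.mem_filter, Finset.mem_powerset] at hG₀'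
  obtain ⟨⟨hG₀F, hG₀copy⟩, hG₀mid⟩ := hG₀'
  have hMid : IsMiddle (Q₁ := Q₁) (Q₂ := Q₂) F M := hG₀mid ▸ copy_isMiddle hG₀F hG₀copy
  -- the two target families
  set F₁ := (F.filter fun A => A ⊂ M).image (subMap M) with hF₁
  set F₂ := (F.filter fun A => M ⊂ A).image (compMap M) with hF₂
  have hfree₁ := middle_F1_free hfree hMid
  have hfree₂ := middle_F2_free hfree hMid
  -- basic facts for a member of the fiber
  have hmemF : ∀ G ∈ fib, ∀ (h : IsCopy (Otimes Q₁ Q₂ 1) G),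
      (∀ a : Q₁, (Exists.choose h) (Otimes.bot a) ∈ F.filter fun A => A ⊂ M) ∧
      (∀ b : Q₂, (Exists.choose h) (Otimes.top b) ∈ F.filter fun A => M ⊂ A) := by
    intro G hG h
    rw [hfib, Finset.mem_filter, Finset.mem_filter, Finset.mem_powerset] at hG
    obtain ⟨⟨hGF, -⟩, hGmid⟩ := hG
    obtain ⟨hinj, himg, hmono⟩ := Exists.choose_spec h
    have hM : (Exists.choose h) (Otimes.mid 0) = M := by rw [← midOf_eq h, hGmid]
    have hmem : ∀ z, (Exists.choose h) z ∈ F := by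
      intro z
      have hz : (Exists.choose h) z ∈ Finset.image (Exists.choose h) Finset.univ :=
        Finset.mem_image_of_mem _ (Finset.mem_univ z)
      rw [himg] at hz
      exact hGF hz
    constructor
    · intro a
      rw [Finset.mem_filter]
      refine ⟨hmem _, ?_⟩
      rw [← hM]
      refine Finset.ssubset_iff_subset_ne.mpr
        ⟨hmono _ _ (otimes_bot_le_mid a 0), fun hEq => ?_⟩
      cases hinj hEq
    · intro b
      rw [Finset.mem_filter]
      refine ⟨hmem _, ?_⟩
      rw [← hM]
      refine Finset.ssubset_iff_subset_ne.mpr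
        ⟨hmono _ _ (otimes_mid_le_top 0 b), fun hEq => ?_⟩
      cases hinj hEq.symm
  -- the injection into pairs of copies
  set Θ : Finset (Finset (Fin n)) →
      Finset (Finset (Fin M.card)) × Finset (Finset (Fin (n - M.card))) := fun G =>
    if h : IsCopy (Otimes Q₁ Q₂ 1) G then
      (((Finset.univ.image ((Exists.choose h) ∘ Otimes.bot)).image (subMap M)),
        ((Finset.univ.image ((Exists.choose h) ∘ Otimes.top)).image (compMap M)))
    else (∅, ∅) with hΘ
  have hcard : fib.card ≤ ((F₁.powerset.filter fun G => IsCopy Q₁ G) ×ˢ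
      (F₂.powerset.filter fun G => IsCopy Q₂ G)).card := by
    refine Finset.card_le_card_of_injOn Θ ?_ ?_
    · intro G hG
      have hcopy : IsCopy (Otimes Q₁ Q₂ 1) G := by
        have := hG
        rw [Finset.mem_coe, hfib, Finset.mem_filter, Finset.mem_filter] at this
        exact this.1.2
      obtain ⟨hbots, htops⟩ := hmemF G hG hcopy
      obtain ⟨hinj, himg, hmono⟩ := Exists.choose_spec hcopy
      rw [hΘ]
      simp only [dif_pos hcopy]
      rw [Finset.mem_coe, Finset.mem_product]
      constructor
      · exact image_copy (subMap M) (fun A => A ⊆ M) (fun A B h => subMap_mono M h)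
          (fun A B hA _ h => subMap_refl M hA h) (F.filter fun A => A ⊂ M)
          (fun A hA => ((Finset.mem_filter.mp hA).2).subset)
          ((Exists.choose hcopy) ∘ Otimes.bot)
          (fun a b hab => otimes_bot_inj (hinj hab))
          (fun a b hab => hmono _ _ (otimes_bot_le_bot hab)) hbots
      · exact image_copy (compMap M) (fun A => M ⊆ A) (fun A B h => compMap_mono M h)
          (fun A B hA hB h => compMap_refl M hA hB h) (F.filter fun A => M ⊂ A)
          (fun A hA => ((Finset.mem_filter.mp hA).2).subset)
          ((Exists.choose hcopy) ∘ Otimes.top)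
          (fun a b hab => otimes_top_inj (hinj hab))
          (fun a b hab => hmono _ _ (otimes_top_le_top hab)) htops
    · intro G hG G' hG' hEq
      have hG'' := hG; have hG''' := hG'
      rw [Finset.mem_coe, hfib, Finset.mem_filter, Finset.mem_filter] at hG'' hG'''
      obtain ⟨⟨hGp, hGc⟩, hGm⟩ := hG''
      obtain ⟨⟨hG'p, hG'c⟩, hG'm⟩ := hG'''
      obtain ⟨hbots, htops⟩ := hmemF G hG hGc
      obtain ⟨hbots', htops'⟩ := hmemF G' hG' hG'c
      obtain ⟨hinj, himg, hmono⟩ := Exists.choose_spec hGc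
      obtain ⟨hinj', himg', hmono'⟩ := Exists.choose_spec hG'c
      rw [hΘ] at hEq
      simp only [dif_pos hGc, dif_pos hG'c, Prod.mk.injEq] at hEq
      obtain ⟨hEq1, hEq2⟩ := hEq
      have hbe : Finset.univ.image ((Exists.choose hGc) ∘ Otimes.bot) =
          Finset.univ.image ((Exists.choose hG'c) ∘ Otimes.bot) := by
        refine image_eq_recon (subMap M) (fun A => A ⊆ M)
          (fun A B hA _ h => subMap_refl M hA h) _ _ ?_ ?_ hEq1
        · intro a; exact ((Finset.mem_filter.mp (hbots a)).2).subset
        · intro a; exact ((Finset.mem_filter.mp (hbots' a)).2).subset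
      have hte : Finset.univ.image ((Exists.choose hGc) ∘ Otimes.top) =
          Finset.univ.image ((Exists.choose hG'c) ∘ Otimes.top) := by
        refine image_eq_recon (compMap M) (fun A => M ⊆ A)
          (fun A B hA hB h => compMap_refl M hA hB h) _ _ ?_ ?_ hEq2
        · intro b; exact ((Finset.mem_filter.mp (htops b)).2).subset
        · intro b; exact ((Finset.mem_filter.mp (htops' b)).2).subset
      have hmid : (Exists.choose hGc) (Otimes.mid 0) = (Exists.choose hG'c) (Otimes.mid 0) := by
        rw [← midOf_eq hGc, ← midOf_eq hG'c, hGm, hG'm]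
      have hdec := otimes_decomp (Exists.choose hGc)
      have hdec' := otimes_decomp (Exists.choose hG'c)
      rw [himg] at hdec
      rw [himg'] at hdec'
      rw [hdec, hdec', hbe, hte, hmid]
  refine hcard.trans ?_
  rw [Finset.card_product]
  exact Nat.mul_le_mul (le_La _ _ _ hfree₁) (le_La _ _ _ hfree₂)

end Fiber

set_option maxHeartbeats 1000000 in
theorem statement13 (Q₁ Q₂ : Type) [PartialOrder Q₁] [Fintype Q₁] [Nonempty Q₁]
    [PartialOrder Q₂] [Fintype Q₂] [Nonempty Q₂] (n : ℕ) (hn : 1 ≤ n) :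
    ∃ j : ℕ, j ≤ n ∧
      La n (PChain (height Q₁ + height Q₂ + 1)) (Otimes Q₁ Q₂ 1) ≤
        n.choose j * La j (PChain (height Q₁ + 1)) Q₁ *
          La (n - j) (PChain (height Q₂ + 1)) Q₂ := by
  classical
  obtain ⟨j, hj, hjs⟩ := Finset.exists_mem_eq_sup (Finset.Iic n)
    ⟨0, Finset.mem_Iic.mpr (Nat.zero_le n)⟩
    (fun r => n.choose r * La r (PChain (height Q₁ + 1)) Q₁ *
      La (n - r) (PChain (height Q₂ + 1)) Q₂)
  refine ⟨j, Finset.mem_Iic.mp hj, ?_⟩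
  rw [← hjs]
  obtain ⟨K, hK⟩ : ∃ K : ℕ, (Finset.Iic n).sup (fun r => n.choose r *
      La r (PChain (height Q₁ + 1)) Q₁ * La (n - r) (PChain (height Q₂ + 1)) Q₂) = K :=
    ⟨_, rfl⟩
  rw [hK]
  unfold La
  refine Finset.sup_le ?_
  intro F hF
  rw [Finset.mem_filter] at hF
  obtain ⟨-, hfree⟩ := hF
  obtain ⟨D, hD⟩ : ∃ D : ℕ → ℕ, ∀ r, D r =
      La r (PChain (height Q₁ + 1)) Q₁ * La (n - r) (PChain (height Q₂ + 1)) Q₂ :=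
    ⟨_, fun _ => rfl⟩
  set Mid := (F.powerset.filter fun G => IsCopy (Otimes Q₁ Q₂ 1) G).image (midOf Q₁ Q₂)
    with hMidDef
  have hstep1 : copyCount (Otimes Q₁ Q₂ 1) F ≤ ∑ M ∈ Mid, D M.card := by
    have h0 : copyCount (Otimes Q₁ Q₂ 1) F =
        (F.powerset.filter fun G => IsCopy (Otimes Q₁ Q₂ 1) G).card := rfl
    rw [h0, Finset.card_eq_sum_card_image (midOf Q₁ Q₂)]
    refine Finset.sum_le_sum fun M _ => ?_
    rw [hD]
    exact fiber_bound hfree M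
  have hmids : ∀ M ∈ Mid, IsMiddle (Q₁ := Q₁) (Q₂ := Q₂) F M := by
    intro M hM
    rw [hMidDef, Finset.mem_image] at hM
    obtain ⟨G, hG, rfl⟩ := hM
    rw [Finset.mem_filter, Finset.mem_powerset] at hG
    exact copy_isMiddle hG.1 hG.2
  have hanti : IsAntichain (· ⊆ ·) (↑Mid : Set (Finset (Fin n))) := by
    intro M hM M' hM' hne hsub
    exact middle_antichain hfree (hmids M (Finset.mem_coe.mp hM))
      (hmids M' (Finset.mem_coe.mp hM')) hne hsub
  have hsl : ∀ r : ℕ, Mid # r = Mid.filter fun M => M.card = r := by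
    intro r
    ext A
    rw [Finset.mem_slice, Finset.mem_filter]
  have hlym : (∑ r ∈ Finset.range (n + 1),
      ((Mid.filter fun M => M.card = r).card : ℚ) / (n.choose r)) ≤ 1 := by
    have h := Finset.sum_card_slice_div_choose_le_one (𝕜 := ℚ) hanti
    rw [Fintype.card_fin] at h
    refine le_trans (le_of_eq (Finset.sum_congr rfl fun r _ => ?_)) h
    rw [hsl r]
  have hQ : (∑ M ∈ Mid, (D M.card : ℚ)) ≤ (K : ℚ) := by
    have hmaps : ∀ M ∈ Mid, M.card ∈ Finset.range (n + 1) := by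
      intro M _
      rw [Finset.mem_range, Nat.lt_succ_iff]
      exact le_trans (Finset.card_le_univ M) (by simp)
    rw [← Finset.sum_fiberwise_of_maps_to hmaps (fun M => (D M.card : ℚ))]
    have hbound : ∀ r ∈ Finset.range (n + 1),
        (∑ M ∈ Mid.filter fun M => M.card = r, (D M.card : ℚ)) ≤
          ((Mid.filter fun M => M.card = r).card : ℚ) / (n.choose r) * K := by
      intro r hr
      have hrn : r ≤ n := Nat.lt_succ_iff.mp (Finset.mem_range.mp hr)
      have hchoose : (n.choose r : ℚ) ≠ 0 := by
        exact_mod_cast (Nat.choose_pos hrn).ne'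
      have h1 : (∑ M ∈ Mid.filter fun M => M.card = r, (D M.card : ℚ)) =
          ((Mid.filter fun M => M.card = r).card : ℚ) * (D r : ℚ) := by
        rw [Finset.sum_congr rfl (fun M hM =>
          by rw [(Finset.mem_filter.mp hM).2] : ∀ M ∈ Mid.filter fun M => M.card = r,
            ((D M.card : ℚ)) = (D r : ℚ))]
        rw [Finset.sum_const, nsmul_eq_mul]
      rw [h1]
      have h2 : (n.choose r : ℚ) * (D r : ℚ) ≤ (K : ℚ) := by
        have h3 : n.choose r * D r ≤ K := by
          rw [hD r, ← hK]
          exact le_of_eq_of_le (Nat.mul_assoc _ _ _).symm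
            (Finset.le_sup (f := fun r => n.choose r *
                La r (PChain (height Q₁ + 1)) Q₁ *
                La (n - r) (PChain (height Q₂ + 1)) Q₂)
              (Finset.mem_Iic.mpr hrn))
        exact_mod_cast h3
      have hcalc : ∀ a d : ℚ, a * d = a / (n.choose r : ℚ) * ((n.choose r : ℚ) * d) := by
        intro a d
        field_simp
      rw [hcalc]
      exact mul_le_mul_of_nonneg_left h2 (div_nonneg (Nat.cast_nonneg _) (Nat.cast_nonneg _))
    calc (∑ r ∈ Finset.range (n + 1), ∑ M ∈ Mid.filter fun M => M.card = r, (D M.card : ℚ))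
        ≤ ∑ r ∈ Finset.range (n + 1),
            ((Mid.filter fun M => M.card = r).card : ℚ) / (n.choose r) * K :=
          Finset.sum_le_sum hbound
      _ = (∑ r ∈ Finset.range (n + 1),
            ((Mid.filter fun M => M.card = r).card : ℚ) / (n.choose r)) * K := by
          rw [Finset.sum_mul]
      _ ≤ 1 * K := mul_le_mul_of_nonneg_right hlym (Nat.cast_nonneg K)
      _ = K := one_mul _
  have hfinal : (∑ M ∈ Mid, D M.card) ≤ K := by
    have : ((∑ M ∈ Mid, D M.card : ℕ) : ℚ) ≤ (K : ℚ) := by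
      push_cast
      exact hQ
    exact_mod_cast this
  exact le_trans hstep1 hfinal

end
end

section
/- Let Q be a non-empty finite poset. Then for every n ≥ 1, La(n, P_{l(Q)+2}, Q ⊕ 1) ≤ max over 0 ≤ j ≤ n of C(n,j) · La(j, P_{l(Q)+1}, Q). -/
open Classical Finset

noncomputable section

section Aux

variable {n : ℕ}

lemma copyCount_eq_zero_iff {α : Type} [PartialOrder α] [Fintype α]
    {F : Finset (Finset (Fin n))} :
    copyCount α F = 0 ↔ ∀ G ⊆ F, ¬ IsCopy α G := by
  unfold copyCount
  rw [Finset.card_eq_zero, Finset.filter_eq_empty_iff]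
  simp [Finset.mem_powerset]

lemma exists_copy_of_ne {α : Type} [PartialOrder α] [Fintype α]
    {F : Finset (Finset (Fin n))} (h : copyCount α F ≠ 0) :
    ∃ G, G ⊆ F ∧ IsCopy α G := by
  by_contra hc
  push_neg at hc
  exact h (copyCount_eq_zero_iff.mpr fun G hG hcopy => hc G hG hcopy)

lemma noChain {m : ℕ} {F : Finset (Finset (Fin n))}
    (hF : copyCount (PChain m) F = 0) (f : Fin m → Finset (Fin n))
    (hmono : ∀ i j : Fin m, i ≤ j → f i ⊆ f j) (hinj : Function.Injective f)
    (hmem : ∀ i, f i ∈ F) : False := by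
  rw [copyCount_eq_zero_iff] at hF
  refine hF (Finset.image f Finset.univ) ?_ ⟨f, hinj, rfl, hmono⟩
  intro A hA
  obtain ⟨i, -, rfl⟩ := Finset.mem_image.mp hA
  exact hmem i

lemma snoc_mono_inj {α : Type*} [PartialOrder α] {m : ℕ} (f : Fin m → α) (b : α)
    (hmono : ∀ i j : Fin m, i ≤ j → f i ≤ f j) (hlt : ∀ i, f i < b)
    (hinj : Function.Injective f) :
    (∀ i j : Fin (m+1), i ≤ j → (Fin.snoc f b : Fin (m+1) → α) i ≤ (Fin.snoc f b : Fin (m+1) → α) j) ∧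
      Function.Injective (Fin.snoc f b : Fin (m+1) → α) := by
  constructor
  · intro i j
    induction j using Fin.lastCases with
    | last =>
      intro _
      induction i using Fin.lastCases with
      | last => exact le_rfl
      | cast i' => rw [Fin.snoc_castSucc, Fin.snoc_last]; exact (hlt i').le
    | cast j' =>
      induction i using Fin.lastCases with
      | last =>
        intro h
        exact absurd (lt_of_le_of_lt h (Fin.castSucc_lt_last j')) (lt_irrefl _)
      | cast i' =>
        intro h
        rw [Fin.snoc_castSucc, Fin.snoc_castSucc]
        exact hmono i' j' (by exact_mod_cast Fin.castSucc_le_castSucc_iff.mp h)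
  · intro i j
    induction i using Fin.lastCases with
    | last =>
      induction j using Fin.lastCases with
      | last => intro _; rfl
      | cast j' =>
        intro h
        rw [Fin.snoc_last, Fin.snoc_castSucc] at h
        exact absurd h.symm (hlt j').ne
    | cast i' =>
      induction j using Fin.lastCases with
      | last =>
        intro h
        rw [Fin.snoc_castSucc, Fin.snoc_last] at h
        exact absurd h (hlt i').ne
      | cast j' =>
        intro h
        rw [Fin.snoc_castSucc, Fin.snoc_castSucc] at h
        exact congrArg Fin.castSucc (hinj h)

lemma chain_enum_s15 {Q : Type} [PartialOrder Q] :
    ∀ (m : ℕ) (C : Finset Q), C.card = m → IsChain (· ≤ ·) (↑C : Set Q) →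
      ∃ f : Fin m → Q, (∀ i j : Fin m, i ≤ j → f i ≤ f j) ∧ Function.Injective f ∧
        ∀ i, f i ∈ C := by
  intro m
  induction m with
  | zero =>
    intro C _ _
    exact ⟨Fin.elim0, fun i => i.elim0, fun i => i.elim0, fun i => i.elim0⟩
  | succ m ih =>
    intro C hcard hchain
    have hne : C.Nonempty := Finset.card_pos.mp (by omega)
    obtain ⟨b, hbC, hbmax⟩ := C.exists_maximal hne
    obtain ⟨f, hmono, hinj, hmem⟩ := ih (C.erase b)
      (by rw [Finset.card_erase_of_mem hbC, hcard]; rfl)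
      (hchain.mono (by intro x hx; exact Finset.mem_of_mem_erase (by exact_mod_cast hx)))
    have hlt : ∀ i, f i < b := by
      intro i
      have hne' : f i ≠ b := Finset.ne_of_mem_erase (hmem i)
      have hfi : f i ∈ C := Finset.mem_of_mem_erase (hmem i)
      rcases hchain.total (by exact_mod_cast hfi) (by exact_mod_cast hbC) with h | h
      · exact lt_of_le_of_ne h hne'
      · exact absurd (le_antisymm (hbmax hfi h) h) hne'
    obtain ⟨hm2, hi2⟩ := snoc_mono_inj f b hmono hlt hinj
    refine ⟨Fin.snoc f b, hm2, hi2, fun i => ?_⟩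
    induction i using Fin.lastCases with
    | last => rw [Fin.snoc_last]; exact hbC
    | cast i' => rw [Fin.snoc_castSucc]; exact Finset.mem_of_mem_erase (hmem i')

lemma height_chain (Q : Type) [PartialOrder Q] [Fintype Q] :
    ∃ f : Fin (height Q) → Q, (∀ i j, i ≤ j → f i ≤ f j) ∧ Function.Injective f := by
  have hne : ((Finset.univ : Finset (Finset Q)).filter fun C : Finset Q =>
      IsChain (· ≤ ·) (↑C : Set Q)).Nonempty := ⟨∅, by simp⟩
  obtain ⟨C, hC, hsup⟩ := Finset.exists_mem_eq_sup _ hne Finset.card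
  rw [Finset.mem_filter] at hC
  have hcard : C.card = height Q := by rw [height]; exact hsup.symm
  obtain ⟨f, h1, h2, -⟩ := chain_enum_s15 (height Q) C hcard hC.2
  exact ⟨f, h1, h2⟩

/-- transfer of families of subsets of `B` down to the ground set `Fin B.card`. -/
def downMap (B : Finset (Fin n)) : Finset (Fin n) → Finset (Fin B.card) :=
  fun A => Finset.univ.filter fun i => (↑(B.equivFin.symm i) : Fin n) ∈ A

lemma downMap_mono {B A A' : Finset (Fin n)} (h : A ⊆ A') : downMap B A ⊆ downMap B A' := by
  intro i hi
  rw [downMap, Finset.mem_filter] at hi ⊢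
  exact ⟨hi.1, h hi.2⟩

lemma downMap_reflect {B A A' : Finset (Fin n)} (hA : A ⊆ B)
    (h : downMap B A ⊆ downMap B A') : A ⊆ A' := by
  intro x hx
  have hxB : x ∈ B := hA hx
  have h1 : B.equivFin ⟨x, hxB⟩ ∈ downMap B A := by
    rw [downMap, Finset.mem_filter, Equiv.symm_apply_apply]
    exact ⟨Finset.mem_univ _, hx⟩
  have h2 := h h1
  rw [downMap, Finset.mem_filter, Equiv.symm_apply_apply] at h2
  exact h2.2

lemma downMap_injOn {B A A' : Finset (Fin n)} (hA : A ⊆ B) (hA' : A' ⊆ B)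
    (h : downMap B A = downMap B A') : A = A' :=
  Finset.Subset.antisymm (downMap_reflect hA (h ▸ Finset.Subset.refl _))
    (downMap_reflect hA' (h ▸ Finset.Subset.refl _))

lemma copyCount_le_down {α : Type} [PartialOrder α] [Fintype α] (B : Finset (Fin n))
    (F1 : Finset (Finset (Fin n))) (hsub : ∀ A ∈ F1, A ⊆ B) :
    copyCount α F1 ≤ copyCount α (F1.image (downMap B)) := by
  unfold copyCount
  apply Finset.card_le_card_of_injOn (fun G => G.image (downMap B))
  · intro G hG
    rw [Finset.mem_coe, Finset.mem_filter, Finset.mem_powerset] at hG ⊢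
    obtain ⟨hGF, φ, hinj, himg, hmono⟩ := hG
    have hφmem : ∀ a : α, φ a ∈ F1 := fun a =>
      hGF (himg ▸ Finset.mem_image_of_mem φ (Finset.mem_univ a))
    refine ⟨Finset.image_subset_image hGF, downMap B ∘ φ, ?_, ?_, ?_⟩
    · intro a b h
      exact hinj (downMap_injOn (hsub _ (hφmem a)) (hsub _ (hφmem b)) h)
    · rw [← himg]; exact Finset.image_image.symm
    · intro x y h
      exact downMap_mono (hmono x y h)
  · intro G1 hG1 G2 hG2 he
    rw [Finset.mem_coe, Finset.mem_filter, Finset.mem_powerset] at hG1 hG2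
    have key : ∀ (H1 H2 : Finset (Finset (Fin n))), H1 ⊆ F1 → H2 ⊆ F1 →
        H1.image (downMap B) = H2.image (downMap B) → H1 ⊆ H2 := by
      intro H1 H2 h1 h2 hee A hA
      have : downMap B A ∈ H2.image (downMap B) := by
        rw [← hee]; exact Finset.mem_image_of_mem _ hA
      obtain ⟨A', hA', hAA⟩ := Finset.mem_image.mp this
      rwa [downMap_injOn (hsub _ (h2 hA')) (hsub _ (h1 hA)) hAA] at hA'
    exact Finset.Subset.antisymm (key G1 G2 hG1.1 hG2.1 he) (key G2 G1 hG2.1 hG1.1 he.symm)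

lemma free_down {P : Type} [PartialOrder P] [Fintype P] (B : Finset (Fin n))
    (F1 : Finset (Finset (Fin n))) (hsub : ∀ A ∈ F1, A ⊆ B)
    (hfree : copyCount P F1 = 0) :
    copyCount P (F1.image (downMap B)) = 0 := by
  rw [copyCount_eq_zero_iff] at hfree ⊢
  rintro G hG ⟨ψ, hinj, himg, hmono⟩
  have hmem : ∀ a : P, ψ a ∈ F1.image (downMap B) := fun a =>
    hG (himg ▸ Finset.mem_image_of_mem ψ (Finset.mem_univ a))
  choose φ hφ1 hφ2 using fun a => Finset.mem_image.mp (hmem a)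
  refine hfree (Finset.image φ Finset.univ) ?_ ⟨φ, ?_, rfl, ?_⟩
  · intro A hA
    obtain ⟨a, -, rfl⟩ := Finset.mem_image.mp hA
    exact hφ1 a
  · intro a b h
    apply hinj
    rw [← hφ2, ← hφ2, h]
  · intro x y hxy
    refine downMap_reflect (hsub _ (hφ1 x)) ?_
    rw [hφ2, hφ2]
    exact hmono x y hxy

end Aux
theorem statement15 (Q : Type) [PartialOrder Q] [Fintype Q] [Nonempty Q]
    (n : ℕ) (hn : 1 ≤ n) :
    ∃ j : ℕ, j ≤ n ∧
      La n (PChain (height Q + 2)) (Oplus Q 1) ≤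
        n.choose j * La j (PChain (height Q + 1)) Q := by
  classical
  obtain ⟨j, hj, hjM⟩ := Finset.exists_mem_eq_sup (Finset.range (n+1))
    ⟨0, Finset.mem_range.mpr (by omega)⟩
    (fun j => n.choose j * La j (PChain (height Q + 1)) Q)
  refine ⟨j, by have := Finset.mem_range.mp hj; omega, ?_⟩
  rw [← hjM]
  set M := (Finset.range (n+1)).sup
    (fun j => n.choose j * La j (PChain (height Q + 1)) Q) with hMdef
  apply Finset.sup_le
  intro F hF
  rw [Finset.mem_filter] at hF
  have hFfree : copyCount (PChain (height Q + 2)) F = 0 := hF.2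
  -- the top set of a copy of `Q ⊕ 1`
  have htop : ∀ G : Finset (Finset (Fin n)), IsCopy (Oplus Q 1) G →
      G.sup id ∈ G ∧ ∀ A ∈ G, A ⊆ G.sup id := by
    rintro G ⟨φ, hinj, himg, hmono⟩
    have hle : ∀ x : Oplus Q 1, x ≤ (Oplus.new 0 : Oplus Q 1) := by
      intro x
      cases x with
      | base a => exact trivial
      | new i =>
        have : i = 0 := Subsingleton.elim i 0
        subst this; exact le_refl _
    have hsub : ∀ A ∈ G, A ⊆ φ (Oplus.new 0) := by
      intro A hA
      rw [← himg] at hA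
      obtain ⟨x, -, rfl⟩ := Finset.mem_image.mp hA
      exact hmono x _ (hle x)
    have hmemtop : φ (Oplus.new 0) ∈ G := by
      rw [← himg]; exact Finset.mem_image_of_mem _ (Finset.mem_univ _)
    have hEq : G.sup id = φ (Oplus.new 0) :=
      le_antisymm (Finset.sup_le fun A hA => Finset.le_iff_subset.mpr (hsub A hA))
        (Finset.le_sup (f := id) hmemtop)
    constructor
    · rw [hEq]; exact hmemtop
    · intro A hA; rw [hEq]; exact hsub A hA
  -- Step 1 : fiberwise count over top sets
  have h1 : copyCount (Oplus Q 1) F ≤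
      ∑ B ∈ F, copyCount Q (F.filter (· ⊂ B)) := by
    unfold copyCount
    rw [Finset.card_eq_sum_card_fiberwise (f := fun G => G.sup id) (t := F)
      (fun G hG => by
        rw [Finset.mem_coe, Finset.mem_filter, Finset.mem_powerset] at hG
        exact hG.1 ((htop G hG.2).1))]
    apply Finset.sum_le_sum
    intro B hB
    apply Finset.card_le_card_of_injOn (fun G => G.erase B)
    · intro G hG
      simp only [Finset.mem_coe, Finset.mem_filter, Finset.mem_powerset] at hG ⊢
      obtain ⟨⟨hGF, hcopy⟩, hsupB⟩ := hG
      obtain ⟨htopmem, htopsub⟩ := htop G hcopy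
      rw [hsupB] at htopmem htopsub
      obtain ⟨φ, hinj, himg, hmono⟩ := hcopy
      have hle : ∀ x : Oplus Q 1, x ≤ (Oplus.new 0 : Oplus Q 1) := by
        intro x
        cases x with
        | base a => exact trivial
        | new i =>
          have : i = 0 := Subsingleton.elim i 0
          subst this; exact le_refl _
      have hmemtop : φ (Oplus.new 0) ∈ G := by
        rw [← himg]; exact Finset.mem_image_of_mem _ (Finset.mem_univ _)
      have hBeq : B = φ (Oplus.new 0) := by
        rw [← hsupB]
        refine le_antisymm (Finset.sup_le fun A hA => ?_) (Finset.le_sup (f := id) hmemtop)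
        rw [← himg] at hA
        obtain ⟨x, -, rfl⟩ := Finset.mem_image.mp hA
        exact Finset.le_iff_subset.mpr (hmono x _ (hle x))
      refine ⟨?_, φ ∘ Oplus.base, ?_, ?_, ?_⟩
      · intro A hA
        rw [Finset.mem_erase] at hA
        rw [Finset.mem_filter]
        exact ⟨hGF hA.2, Finset.ssubset_iff_subset_ne.mpr ⟨htopsub A hA.2, hA.1⟩⟩
      · intro a b h
        have h2 : Oplus.base a = (Oplus.base b : Oplus Q 1) := hinj h
        injection h2
      · ext A
        simp only [Finset.mem_image, Finset.mem_univ, true_and, Function.comp_apply,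
          Finset.mem_erase]
        constructor
        · rintro ⟨q, rfl⟩
          refine ⟨?_, by rw [← himg]; exact Finset.mem_image_of_mem _ (Finset.mem_univ _)⟩
          intro hcon
          rw [hBeq] at hcon
          cases hinj hcon
        · rintro ⟨hAB, hAG⟩
          rw [← himg] at hAG
          obtain ⟨x, -, rfl⟩ := Finset.mem_image.mp hAG
          cases x with
          | base q => exact ⟨q, rfl⟩
          | new i =>
            exfalso
            apply hAB
            rw [hBeq, Subsingleton.elim i (0 : Fin 1)]
      · intro x y hxy
        exact hmono _ _ hxy
    · intro G1 hG1 G2 hG2 he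
      have he' : G1.erase B = G2.erase B := he
      rw [Finset.mem_coe, Finset.mem_filter, Finset.mem_filter, Finset.mem_powerset] at hG1
      rw [Finset.mem_coe, Finset.mem_filter, Finset.mem_filter, Finset.mem_powerset] at hG2
      have hB1 : B ∈ G1 := by rw [← hG1.2]; exact (htop G1 hG1.1.2).1
      have hB2 : B ∈ G2 := by rw [← hG2.2]; exact (htop G2 hG2.1.2).1
      rw [← Finset.insert_erase hB1, ← Finset.insert_erase hB2, he']
  -- Step 2 : each restricted family is P_{l+1}-free
  have hFBfree : ∀ B ∈ F, copyCount (PChain (height Q + 1)) (F.filter (· ⊂ B)) = 0 := by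
    intro B hBF
    by_contra hne
    obtain ⟨G, hGsub, φ, hinj, himg, hmono⟩ := exists_copy_of_ne hne
    have hφmem : ∀ i, φ i ∈ F.filter (· ⊂ B) := fun i =>
      hGsub (himg ▸ Finset.mem_image_of_mem φ (Finset.mem_univ i))
    have hlt : ∀ i, φ i < B := fun i =>
      Finset.lt_iff_ssubset.mpr (Finset.mem_filter.mp (hφmem i)).2
    have hmono' : ∀ i j : Fin (height Q + 1), i ≤ j → φ i ≤ φ j := fun i j h =>
      Finset.le_iff_subset.mpr (hmono i j h)
    obtain ⟨hm, hi⟩ := snoc_mono_inj φ B hmono' hlt hinj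
    refine noChain hFfree (Fin.snoc φ B)
      (fun i j h => Finset.le_iff_subset.mp (hm i j h)) hi (fun i => ?_)
    induction i using Fin.lastCases with
    | last => rw [Fin.snoc_last]; exact hBF
    | cast i' =>
      rw [Fin.snoc_castSucc]
      exact Finset.mem_of_mem_filter _ (hφmem i')
  -- Step 3 : bound each restricted family via La on the smaller ground set
  have hFBbound : ∀ B ∈ F,
      copyCount Q (F.filter (· ⊂ B)) ≤ La B.card (PChain (height Q + 1)) Q := by
    intro B hBF
    have hsubB : ∀ A ∈ F.filter (· ⊂ B), A ⊆ B := fun A hA =>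
      ((Finset.mem_filter.mp hA).2).subset
    refine le_trans (copyCount_le_down B _ hsubB) ?_
    apply Finset.le_sup
    rw [Finset.mem_filter]
    exact ⟨Finset.mem_univ _, free_down B _ hsubB (hFBfree B hBF)⟩
  -- Step 4 : the useful top sets form an antichain
  set T := F.filter (fun B => copyCount Q (F.filter (· ⊂ B)) ≠ 0) with hTdef
  have hanti : IsAntichain (· ⊆ ·) (↑T : Set (Finset (Fin n))) := by
    intro B1 hB1 B2 hB2 hne hsub
    rw [Finset.mem_coe, hTdef, Finset.mem_filter] at hB1 hB2
    obtain ⟨G, hGsub, φ, hinj, himg, hmono⟩ := exists_copy_of_ne hB1.2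
    obtain ⟨f0, hf0mono, hf0inj⟩ := height_chain Q
    have hmem : ∀ i, φ (f0 i) ∈ F.filter (· ⊂ B1) := fun i =>
      hGsub (himg ▸ Finset.mem_image_of_mem φ (Finset.mem_univ (f0 i)))
    have hlt1 : ∀ i, φ (f0 i) < B1 := fun i =>
      Finset.lt_iff_ssubset.mpr (Finset.mem_filter.mp (hmem i)).2
    have h12 : B1 < B2 :=
      Finset.lt_iff_ssubset.mpr (Finset.ssubset_iff_subset_ne.mpr ⟨hsub, hne⟩)
    obtain ⟨hm1, hi1⟩ := snoc_mono_inj (fun i => φ (f0 i)) B1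
      (fun i j h => Finset.le_iff_subset.mpr (hmono _ _ (hf0mono i j h))) hlt1
      (fun a b h => hf0inj (hinj h))
    have hlt2 : ∀ i : Fin (height Q + 1),
        (Fin.snoc (fun i => φ (f0 i)) B1 : Fin (height Q + 1) → Finset (Fin n)) i < B2 := by
      intro i
      induction i using Fin.lastCases with
      | last => rw [Fin.snoc_last]; exact h12
      | cast i' => rw [Fin.snoc_castSucc]; exact lt_trans (hlt1 i') h12
    obtain ⟨hm2, hi2⟩ := snoc_mono_inj _ B2 hm1 hlt2 hi1
    refine noChain hFfree (Fin.snoc (Fin.snoc (fun i => φ (f0 i)) B1) B2)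
      (fun i j h => Finset.le_iff_subset.mp (hm2 i j h)) hi2 (fun i => ?_)
    induction i using Fin.lastCases with
    | last => rw [Fin.snoc_last]; exact hB2.1
    | cast i' =>
      rw [Fin.snoc_castSucc]
      induction i' using Fin.lastCases with
      | last => rw [Fin.snoc_last]; exact hB1.1
      | cast i'' =>
        rw [Fin.snoc_castSucc]
        exact Finset.mem_of_mem_filter _ (hmem i'')
  -- Step 5 : sum over the antichain, LYM
  have h2 : copyCount (Oplus Q 1) F ≤ ∑ B ∈ T, La B.card (PChain (height Q + 1)) Q := by
    refine h1.trans ?_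
    rw [← Finset.sum_filter_ne_zero F
      (f := fun B => copyCount Q (F.filter (· ⊂ B)))]
    exact Finset.sum_le_sum fun B hB =>
      hFBbound B (Finset.mem_of_mem_filter _ hB)
  have hMcast : ∀ r ∈ Finset.range (n+1),
      (n.choose r : ℚ) * (La r (PChain (height Q + 1)) Q : ℚ) ≤ (M : ℚ) := by
    intro r hr
    have := Finset.le_sup (f := fun j => n.choose j * La j (PChain (height Q + 1)) Q) hr
    exact_mod_cast this
  have hcardmem : ∀ B ∈ T, B.card ∈ Finset.range (n+1) := by
    intro B _
    rw [Finset.mem_range]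
    have h := Finset.card_le_univ B
    rw [Fintype.card_fin] at h
    omega
  have h3 : ((∑ B ∈ T, La B.card (PChain (height Q + 1)) Q : ℕ) : ℚ) ≤ (M : ℚ) := by
    push_cast
    rw [← Finset.sum_fiberwise_of_maps_to hcardmem
      (fun B => (La B.card (PChain (height Q + 1)) Q : ℚ))]
    have hstep : ∀ r ∈ Finset.range (n+1),
        ∑ B ∈ T.filter (fun B => B.card = r), (La B.card (PChain (height Q + 1)) Q : ℚ) ≤
          ((T # r).card : ℚ) / (n.choose r) * M := by
      intro r hr
      have hrn : r ≤ n := by rw [Finset.mem_range] at hr; omega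
      have hCpos : (0:ℚ) < (n.choose r : ℚ) := by exact_mod_cast Nat.choose_pos hrn
      have hconst : ∑ B ∈ T.filter (fun B => B.card = r),
          (La B.card (PChain (height Q + 1)) Q : ℚ) =
          ((T.filter (fun B => B.card = r)).card : ℚ) *
            (La r (PChain (height Q + 1)) Q : ℚ) := by
        rw [Finset.sum_congr rfl (fun B hB => by
          rw [(Finset.mem_filter.mp hB).2]), Finset.sum_const, nsmul_eq_mul]
      have hslice : T # r = T.filter (fun B => B.card = r) := rfl
      rw [hconst, hslice]
      set c : ℚ := ((T.filter (fun B => B.card = r)).card : ℚ) with hc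
      calc c * (La r (PChain (height Q + 1)) Q : ℚ)
          = c / (n.choose r : ℚ) *
            ((n.choose r : ℚ) * (La r (PChain (height Q + 1)) Q : ℚ)) := by
            field_simp
        _ ≤ c / (n.choose r : ℚ) * M := by
            refine mul_le_mul_of_nonneg_left (hMcast r hr) ?_
            positivity
    refine le_trans (Finset.sum_le_sum hstep) ?_
    rw [← Finset.sum_mul]
    have hLYM := Finset.sum_card_slice_div_choose_le_one (𝕜 := ℚ) (𝒜 := T) hanti
    simp only [Fintype.card_fin] at hLYM
    calc (∑ r ∈ Finset.range (n+1), ((T # r).card : ℚ) / (n.choose r)) * (M : ℚ)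
        ≤ 1 * (M : ℚ) := by
          refine mul_le_mul_of_nonneg_right hLYM ?_
          positivity
      _ = (M : ℚ) := one_mul _
  have final : ((copyCount (Oplus Q 1) F : ℕ) : ℚ) ≤ (M : ℚ) :=
    le_trans (by exact_mod_cast h2) h3
  exact_mod_cast final

end
end
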